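/- arXiv:1601.00438 — 7 statements merged into one kernel-verified Lean document; each statement's English description precedes it below -/
import Mathlib

section
/- Any min-plus polynomial function of degree n, \(\hat P(y)=\min_{0\le k\le n}(P_k+ky)\) with \(P_n\ne +\infty\), can be factored in a unique way as \(\hat P(y)=P_n+\sum_{i=1}^n \min(y,c_i)\) for some \(c_1\le\cdots\le c_n\in\mathbb{R}\cup\{+\infty\}\). -/
open scoped Classical

/-- The min-plus polynomial function `ŷ ↦ min_{0 ≤ k ≤ n} (P_k + k y)`. -/
noncomputable def tropEval (P : ℕ → WithTop ℝ) (n : ℕ) (y : ℝ) : WithTop ℝ :=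
  (Finset.range (n + 1)).inf fun k => P k + (((k : ℝ) * y : ℝ) : WithTop ℝ)

namespace TropAux

open Finset

variable (P : ℕ → WithTop ℝ) (n : ℕ)

noncomputable def fr (y : ℝ) : ℝ := (tropEval P n y).untopD 0

noncomputable def Q (k : ℕ) : WithTop ℝ :=
  ⨆ y : ℝ, ((fr P n y - k * y : ℝ) : WithTop ℝ)

noncomputable def q (k : ℕ) : ℝ := (Q P n k).untopD 0

noncomputable def d (j : ℕ) : WithTop ℝ := Q P n j + ((-(q P n (j + 1)) : ℝ) : WithTop ℝ)

lemma eval_le {k : ℕ} (hk : k ≤ n) (y : ℝ) :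
    tropEval P n y ≤ P k + (((k : ℝ) * y : ℝ) : WithTop ℝ) :=
  Finset.inf_le (by simp only [mem_range]; omega)

lemma le_eval {y : ℝ} {b : WithTop ℝ}
    (h : ∀ k ≤ n, b ≤ P k + (((k : ℝ) * y : ℝ) : WithTop ℝ)) : b ≤ tropEval P n y :=
  Finset.le_inf fun k hk => h k (by simpa using Nat.lt_succ_iff.mp (mem_range.mp hk))

variable {P n}
variable (hP : P n ≠ ⊤)
include hP

lemma eval_ne_top (y : ℝ) : tropEval P n y ≠ ⊤ := by
  intro h
  have := eval_le P n le_rfl y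
  rw [h, top_le_iff] at this
  exact hP ((WithTop.add_eq_top.mp this).resolve_right WithTop.coe_ne_top)

lemma coe_fr (y : ℝ) : ((fr P n y : ℝ) : WithTop ℝ) = tropEval P n y := by
  obtain ⟨a, ha⟩ := WithTop.ne_top_iff_exists.mp (eval_ne_top hP y)
  rw [fr, ← ha]
  simp

lemma coe_fr_le {k : ℕ} (hk : k ≤ n) (y : ℝ) :
    ((fr P n y : ℝ) : WithTop ℝ) ≤ P k + (((k : ℝ) * y : ℝ) : WithTop ℝ) := by
  rw [coe_fr hP]; exact eval_le P n hk y

end TropAux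

namespace TropAux
open Finset
variable {P : ℕ → WithTop ℝ} {n : ℕ}

lemma isLUB_Q (k : ℕ) :
    IsLUB (Set.range fun y : ℝ => ((fr P n y - k * y : ℝ) : WithTop ℝ)) (Q P n k) :=
  WithTop.isLUB_sSup' (Set.range_nonempty _)

lemma le_Q (k : ℕ) (y : ℝ) : ((fr P n y - k * y : ℝ) : WithTop ℝ) ≤ Q P n k :=
  (isLUB_Q k).1 (Set.mem_range_self y)

lemma Q_le {k : ℕ} {b : WithTop ℝ}
    (h : ∀ y : ℝ, ((fr P n y - k * y : ℝ) : WithTop ℝ) ≤ b) : Q P n k ≤ b :=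
  (isLUB_Q k).2 (by rintro _ ⟨y, rfl⟩; exact h y)

lemma coe_fr_le_Q_add (k : ℕ) (y : ℝ) :
    ((fr P n y : ℝ) : WithTop ℝ) ≤ Q P n k + (((k : ℝ) * y : ℝ) : WithTop ℝ) := by
  have := add_le_add_left (le_Q (P := P) (n := n) k y) (((k : ℝ) * y : ℝ) : WithTop ℝ)
  refine le_trans (le_of_eq ?_) this
  rw [← WithTop.coe_add]
  ring_nf

variable (hP : P n ≠ ⊤)
include hP

lemma Q_le_P {k : ℕ} (hk : k ≤ n) : Q P n k ≤ P k := by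
  refine Q_le fun y => ?_
  rcases eq_or_ne (P k) ⊤ with h | h
  · simp [h]
  obtain ⟨p, hp⟩ := WithTop.ne_top_iff_exists.mp h
  have := coe_fr_le hP hk y
  rw [← hp] at this ⊢
  rw [← WithTop.coe_add, WithTop.coe_le_coe] at this
  rw [WithTop.coe_le_coe]
  linarith

lemma Q_eq_Pn : Q P n n = P n := by
  obtain ⟨p, hp⟩ := WithTop.ne_top_iff_exists.mp hP
  -- choose y₀ small enough
  have hex : ∃ y₀ : ℝ, ∀ k ≤ n, P n + (((n : ℝ) * y₀ : ℝ) : WithTop ℝ)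
      ≤ P k + (((k : ℝ) * y₀ : ℝ) : WithTop ℝ) := by
    set g : ℕ → ℝ := fun k =>
      if h : P k = ⊤ ∨ n ≤ k then 0 else (((P k).untopD 0 - p) / ((n : ℝ) - k)) with hg
    refine ⟨(range (n + 1)).inf' ⟨n, by simp⟩ g, fun k hk => ?_⟩
    rcases eq_or_ne (P k) ⊤ with h | h
    · simp [h]
    rcases Nat.lt_or_ge k n with hkn | hkn
    · obtain ⟨pk, hpk⟩ := WithTop.ne_top_iff_exists.mp h
      set y₀ := (range (n + 1)).inf' ⟨n, by simp⟩ g with hy₀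
      have hle : y₀ ≤ g k := Finset.inf'_le g (by simp only [mem_range]; omega)
      have hgk : g k = (pk - p) / ((n : ℝ) - k) := by
        show (if h : P k = ⊤ ∨ n ≤ k then 0 else ((P k).untopD 0 - p) / ((n : ℝ) - k))
            = (pk - p) / ((n : ℝ) - k)
        rw [dif_neg (by push_neg; exact ⟨h, by omega⟩)]
        simp [← hpk]
      have hnk : (0 : ℝ) < (n : ℝ) - k := by
        have : (k : ℝ) < n := by exact_mod_cast hkn
        linarith
      have : ((n : ℝ) - k) * y₀ ≤ pk - p := by
        rw [hgk] at hle
        calc ((n : ℝ) - k) * y₀ ≤ ((n : ℝ) - k) * ((pk - p) / ((n : ℝ) - k)) := by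
              exact mul_le_mul_of_nonneg_left hle hnk.le
          _ = pk - p := by field_simp
      rw [← hp, ← hpk, ← WithTop.coe_add, ← WithTop.coe_add, WithTop.coe_le_coe]
      nlinarith [this]
    · have hkn' : k = n := le_antisymm (by omega) hkn
      subst hkn'; exact le_rfl
  obtain ⟨y₀, hy₀⟩ := hex
  refine le_antisymm (Q_le_P hP le_rfl) ?_
  have heq : ((fr P n y₀ : ℝ) : WithTop ℝ) = P n + (((n : ℝ) * y₀ : ℝ) : WithTop ℝ) := by
    rw [coe_fr hP]
    exact le_antisymm (eval_le P n le_rfl y₀) (le_eval P n hy₀)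
  rw [← hp, ← WithTop.coe_add, WithTop.coe_eq_coe] at heq
  have : p = fr P n y₀ - (n : ℝ) * y₀ := by linarith
  rw [← hp, this]
  exact le_Q n y₀

end TropAux

namespace TropAux
open Finset
variable {P : ℕ → WithTop ℝ} {n : ℕ} (hP : P n ≠ ⊤)
include hP

omit hP in
/-- If `Q j ≠ ⊤` we get a real upper bound. -/
lemma Q_ne_top_bound {j : ℕ} (h : Q P n j ≠ ⊤) :
    ∃ m : ℝ, ∀ y : ℝ, fr P n y - j * y ≤ m := by
  obtain ⟨m, hm⟩ := WithTop.ne_top_iff_exists.mp h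
  exact ⟨m, fun y => WithTop.coe_le_coe.mp (hm ▸ le_Q j y)⟩

lemma Q_top_of {k : ℕ} (hk : k + 1 ≤ n) (h : Q P n (k + 1) = ⊤) : Q P n k = ⊤ := by
  obtain ⟨p, hp⟩ := WithTop.ne_top_iff_exists.mp hP
  by_contra hne
  obtain ⟨m, hm⟩ := Q_ne_top_bound hne
  have hbound : ∀ y : ℝ, fr P n y - (k + 1 : ℕ) * y ≤ max p m := by
    intro y
    have h1 : fr P n y ≤ p + (n : ℝ) * y := by
      have := coe_fr_le hP le_rfl y
      rw [← hp, ← WithTop.coe_add, WithTop.coe_le_coe] at this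
      exact this
    rcases le_or_gt y 0 with hy | hy
    · have hcast : ((k + 1 : ℕ) : ℝ) ≤ (n : ℝ) := by exact_mod_cast hk
      have : fr P n y - (k + 1 : ℕ) * y ≤ p + ((n : ℝ) - (k + 1 : ℕ)) * y := by ring_nf; linarith
      have h2 : ((n : ℝ) - (k + 1 : ℕ)) * y ≤ 0 := mul_nonpos_of_nonneg_of_nonpos (by linarith) hy
      calc fr P n y - (k + 1 : ℕ) * y ≤ p + ((n : ℝ) - (k + 1 : ℕ)) * y := this
        _ ≤ p := by linarith
        _ ≤ max p m := le_max_left _ _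
    · have h2 := hm y
      have : fr P n y - (k + 1 : ℕ) * y ≤ m - y := by push_cast; push_cast at h2; linarith
      calc fr P n y - (k + 1 : ℕ) * y ≤ m - y := this
        _ ≤ m := by linarith
        _ ≤ max p m := le_max_right _ _
  have : Q P n (k + 1) ≤ ((max p m : ℝ) : WithTop ℝ) :=
    Q_le fun y => WithTop.coe_le_coe.mpr (hbound y)
  rw [h, top_le_iff] at this
  exact WithTop.coe_ne_top this

lemma Q_concave {k : ℕ} (hk : k + 2 ≤ n) :
    Q P n (k + 1) + Q P n (k + 1) ≤ Q P n k + Q P n (k + 2) := by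
  rcases eq_or_ne (Q P n (k + 1)) ⊤ with h | h
  · have : Q P n k = ⊤ := Q_top_of hP (by omega) h
    simp [this]
  obtain ⟨m, hm⟩ := WithTop.ne_top_iff_exists.mp h
  by_contra hcon
  push_neg at hcon
  rw [← hm] at hcon
  have h2 : Q P n k ≠ ⊤ := fun ht => by simp [ht] at hcon
  have h3 : Q P n (k + 2) ≠ ⊤ := fun ht => by simp [ht] at hcon
  obtain ⟨a, ha⟩ := WithTop.ne_top_iff_exists.mp h2
  obtain ⟨b, hb⟩ := WithTop.ne_top_iff_exists.mp h3
  rw [← ha, ← hb, ← WithTop.coe_add, ← WithTop.coe_add, WithTop.coe_lt_coe] at hcon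
  -- m is LUB; find y with fr y - (k+1) y > (a+b)/2
  have hexy : ∃ y : ℝ, (a + b) / 2 < fr P n y - (k + 1 : ℕ) * y := by
    by_contra hno
    push_neg at hno
    have : Q P n (k + 1) ≤ (((a + b) / 2 : ℝ) : WithTop ℝ) :=
      Q_le fun y => WithTop.coe_le_coe.mpr (hno y)
    rw [← hm, WithTop.coe_le_coe] at this
    linarith
  obtain ⟨y, hy⟩ := hexy
  have e1 : fr P n y - (k : ℕ) * y ≤ a := WithTop.coe_le_coe.mp (ha ▸ le_Q k y)
  have e2 : fr P n y - (k + 2 : ℕ) * y ≤ b := WithTop.coe_le_coe.mp (hb ▸ le_Q (k + 2) y)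
  push_cast at hy e1 e2
  linarith

lemma Q_tel {k : ℕ} (hk : k < n) : Q P n k = d P n k + Q P n (k + 1) := by
  rcases eq_or_ne (Q P n (k + 1)) ⊤ with h | h
  · rw [h, Q_top_of hP hk h, WithTop.add_top]
  obtain ⟨a, ha⟩ := WithTop.ne_top_iff_exists.mp h
  have hq : q P n (k + 1) = a := by rw [q, ← ha]; simp
  rw [d, ← ha, hq, add_assoc, ← WithTop.coe_add]
  simp

lemma d_anti {i j : ℕ} (hij : i ≤ j) (hj : j + 1 ≤ n) : d P n j ≤ d P n i := by
  induction j with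
  | zero => cases Nat.le_zero.mp hij; exact le_rfl
  | succ m ih =>
    rcases Nat.lt_or_ge i (m + 1) with hi | hi
    · refine le_trans ?_ (ih (by omega) (by omega))
      -- d (m+1) ≤ d m
      rcases eq_or_ne (Q P n (m + 1)) ⊤ with h | h
      · have h0 : Q P n m = ⊤ := Q_top_of hP (by omega) h
        have : d P n m = ⊤ := by rw [d, h0, WithTop.top_add]
        rw [this]; exact le_top
      have h2 : Q P n (m + 2) ≠ ⊤ := by
        intro ht
        exact h (Q_top_of hP (by omega) ht)
      obtain ⟨a, ha⟩ := WithTop.ne_top_iff_exists.mp h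
      obtain ⟨b, hb⟩ := WithTop.ne_top_iff_exists.mp h2
      have hqa : q P n (m + 1) = a := by rw [q, ← ha]; simp
      have hqb : q P n (m + 2) = b := by rw [q, ← hb]; simp
      rcases eq_or_ne (Q P n m) ⊤ with h0 | h0
      · have : d P n m = ⊤ := by rw [d, h0, WithTop.top_add]
        rw [this]; exact le_top
      obtain ⟨c, hc⟩ := WithTop.ne_top_iff_exists.mp h0
      have hcon := Q_concave hP (show m + 2 ≤ n by omega)
      rw [← ha, ← hb, ← hc, ← WithTop.coe_add, ← WithTop.coe_add, WithTop.coe_le_coe] at hcon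
      show Q P n (m + 1) + _ ≤ Q P n m + _
      rw [← ha, ← hc, hqa, hqb, ← WithTop.coe_add, ← WithTop.coe_add, WithTop.coe_le_coe]
      linarith
    · have : i = m + 1 := by omega
      subst this; exact le_rfl

lemma Q_eq_sum {k : ℕ} (hk : k ≤ n) :
    Q P n k = Q P n n + ∑ j ∈ Ico k n, d P n j := by
  obtain ⟨m, hm⟩ : ∃ m, n - k = m := ⟨n - k, rfl⟩
  induction m generalizing k with
  | zero =>
    have : k = n := by omega
    subst this; simp
  | succ m ih =>
    have hkn : k < n := by omega
    rw [Finset.sum_eq_sum_Ico_succ_bot hkn, Q_tel hP hkn, ih (by omega) (by omega)]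
    rw [← add_assoc, ← add_assoc, add_comm (d P n k) (Q P n n)]

end TropAux

namespace TropAux
open Finset
variable {P : ℕ → WithTop ℝ} {n : ℕ}

lemma coe_mul_eq_sum (k : ℕ) (y : ℝ) :
    (((k : ℝ) * y : ℝ) : WithTop ℝ) = ∑ _j ∈ range k, ((y : ℝ) : WithTop ℝ) := by
  induction k with
  | zero => simp
  | succ m ih =>
    rw [Finset.sum_range_succ, ← ih, ← WithTop.coe_add, WithTop.coe_eq_coe]
    push_cast; ring

variable (hP : P n ≠ ⊤)
include hP

lemma sum_min_le {k : ℕ} (hk : k ≤ n) (y : ℝ) :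
    Q P n n + ∑ j ∈ range n, min (↑y) (d P n j)
      ≤ Q P n k + (((k : ℝ) * y : ℝ) : WithTop ℝ) := by
  rw [Q_eq_sum hP hk, add_assoc]
  refine add_le_add_right ?_ _
  rw [range_eq_Ico, ← Finset.sum_Ico_consecutive _ (Nat.zero_le k) hk]
  rw [add_comm (∑ j ∈ Ico k n, d P n j)]
  refine add_le_add ?_ (Finset.sum_le_sum fun j _ => min_le_right _ _)
  rw [coe_mul_eq_sum, range_eq_Ico]
  exact Finset.sum_le_sum fun j _ => min_le_left _ _

lemma exists_eq_sum_min (y : ℝ) :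
    ∃ k ≤ n, Q P n k + (((k : ℝ) * y : ℝ) : WithTop ℝ)
      = Q P n n + ∑ j ∈ range n, min (↑y) (d P n j) := by
  classical
  set k := ((range n).filter fun j => (↑y : WithTop ℝ) ≤ d P n j).card with hkdef
  have hkn : k ≤ n := le_trans (Finset.card_filter_le _ _) (by simp)
  have hfil : ∀ j < n, ((↑y : WithTop ℝ) ≤ d P n j ↔ j < k) := by
    intro j hj
    constructor
    · intro hyd
      have hsub : range (j + 1) ⊆ (range n).filter fun j' => (↑y : WithTop ℝ) ≤ d P n j' := by
        intro j' hj'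
        have hj'j : j' ≤ j := by simpa [Nat.lt_succ_iff] using hj'
        refine Finset.mem_filter.mpr ⟨Finset.mem_range.mpr (by omega), ?_⟩
        exact le_trans hyd (d_anti hP hj'j (by omega))
      have := Finset.card_le_card hsub
      simpa [hkdef] using this
    · intro hjk
      by_contra hno
      have hsub : ((range n).filter fun j' => (↑y : WithTop ℝ) ≤ d P n j') ⊆ range j := by
        intro j' hj'
        obtain ⟨hj'n, hyd'⟩ := Finset.mem_filter.mp hj'
        rw [Finset.mem_range] at hj'n ⊢
        by_contra hge
        push_neg at hge
        exact hno (le_trans hyd' (d_anti hP hge hj'n))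
      have := Finset.card_le_card hsub
      rw [Finset.card_range] at this
      omega
  refine ⟨k, hkn, ?_⟩
  rw [Q_eq_sum hP hkn, coe_mul_eq_sum, add_assoc]
  congr 1
  rw [range_eq_Ico n, ← Finset.sum_Ico_consecutive (fun j => min (↑y) (d P n j)) (Nat.zero_le k) hkn]
  rw [add_comm (∑ j ∈ Ico k n, d P n j)]
  congr 1
  · rw [← range_eq_Ico]
    refine Finset.sum_congr rfl fun j hj => ?_
    rw [Finset.mem_range] at hj
    exact ((min_eq_left ((hfil j (by omega)).mpr hj))).symm
  · refine Finset.sum_congr rfl fun j hj => ?_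
    rw [Finset.mem_Ico] at hj
    have : ¬ ((↑y : WithTop ℝ) ≤ d P n j) := fun h => by
      have := (hfil j hj.2).mp h; omega
    push_neg at this
    exact (min_eq_right this.le).symm

lemma eval_eq_d (y : ℝ) :
    tropEval P n y = P n + ∑ j ∈ range n, min (↑y) (d P n j) := by
  rw [← Q_eq_Pn hP]
  refine le_antisymm ?_ ?_
  · obtain ⟨k, hk, heq⟩ := exists_eq_sum_min hP y
    rw [← heq, ← coe_fr hP]
    exact coe_fr_le_Q_add k y
  · refine le_eval P n fun k hk => ?_
    exact le_trans (sum_min_le hP hk y)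
      (add_le_add_left (Q_le_P hP hk) _)

end TropAux

namespace TropAux
open Finset
variable {P : ℕ → WithTop ℝ} {n : ℕ} (hP : P n ≠ ⊤)
include hP

/-- If the polynomial function has a representation `P n + ∑ min(y, e j)` with `e`
monotone on `[0, n)`, then `Q k` is given by the formula `P n + ∑_{j < n-k} e j`. -/
lemma Q_of_repr {e : ℕ → WithTop ℝ}
    (hmo : ∀ ⦃j j' : ℕ⦄, j ≤ j' → j' < n → e j ≤ e j')
    (htop : ∀ j, n ≤ j → e j = ⊤)
    (he : ∀ y : ℝ, tropEval P n y = P n + ∑ j ∈ range n, min (↑y) (e j))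
    {k : ℕ} (hk : k ≤ n) :
    Q P n k = P n + ∑ j ∈ range (n - k), e j := by
  obtain ⟨pn, hpn⟩ := WithTop.ne_top_iff_exists.mp hP
  have hmo' : ∀ ⦃j j' : ℕ⦄, j ≤ j' → e j ≤ e j' := by
    intro j j' hjj
    rcases Nat.lt_or_ge j' n with h | h
    · exact hmo hjj h
    · rw [htop j' h]; exact le_top
  have hcoe : ∀ y : ℝ, ((fr P n y : ℝ) : WithTop ℝ)
      = P n + ∑ j ∈ range n, min (↑y) (e j) := fun y => by rw [coe_fr hP]; exact he y
  have hsplit : ∀ (y : ℝ) (m : ℕ), m ≤ n → ∑ j ∈ range n, min (↑y : WithTop ℝ) (e j)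
      = ∑ j ∈ range m, min (↑y : WithTop ℝ) (e j) + ∑ j ∈ Ico m n, min (↑y : WithTop ℝ) (e j) := by
    intro y m hm
    rw [range_eq_Ico, ← Finset.sum_Ico_consecutive _ (Nat.zero_le m) hm, ← range_eq_Ico m]
  refine le_antisymm ?_ ?_
  · -- upper bound
    refine Q_le fun y => ?_
    rcases eq_or_ne (P n + ∑ j ∈ range (n - k), e j) ⊤ with h | h
    · rw [h]; exact le_top
    obtain ⟨r, hr⟩ := WithTop.ne_top_iff_exists.mp h
    have hfr : ((fr P n y : ℝ) : WithTop ℝ) ≤ ((r + (k : ℝ) * y : ℝ) : WithTop ℝ) := by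
      rw [hcoe y, hsplit y (n - k) (by omega)]
      have h1 : ∑ j ∈ range (n - k), min (↑y : WithTop ℝ) (e j)
          ≤ ∑ j ∈ range (n - k), e j := Finset.sum_le_sum fun j _ => min_le_right _ _
      have h2 : ∑ j ∈ Ico (n - k) n, min (↑y : WithTop ℝ) (e j)
          ≤ ∑ _j ∈ Ico (n - k) n, ((y : ℝ) : WithTop ℝ) :=
        Finset.sum_le_sum fun j _ => min_le_left _ _
      have h3 : ∑ _j ∈ Ico (n - k) n, ((y : ℝ) : WithTop ℝ)
          = (((k : ℝ) * y : ℝ) : WithTop ℝ) := by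
        rw [Finset.sum_const, Nat.card_Ico, coe_mul_eq_sum, Finset.sum_const, card_range]
        congr 1; omega
      calc P n + (∑ j ∈ range (n - k), min (↑y : WithTop ℝ) (e j)
            + ∑ j ∈ Ico (n - k) n, min (↑y : WithTop ℝ) (e j))
          ≤ P n + (∑ j ∈ range (n - k), e j + (((k : ℝ) * y : ℝ) : WithTop ℝ)) := by
            refine add_le_add_right (add_le_add h1 (le_trans h2 (le_of_eq h3))) _
        _ = ((r + (k : ℝ) * y : ℝ) : WithTop ℝ) := by
            rw [← add_assoc, ← hr, ← WithTop.coe_add]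
    rw [WithTop.coe_le_coe] at hfr
    rw [← hr, WithTop.coe_le_coe]
    linarith
  · -- lower bound
    rcases Nat.eq_or_lt_of_le hk with hkn | hkn
    · subst hkn; simp [Q_eq_Pn hP]
    by_cases hc : ∃ j₀, j₀ < n - k ∧ e j₀ = ⊤
    · -- unbounded case : Q k = ⊤
      obtain ⟨j₀, hj₀, hej₀⟩ := hc
      set r : ℕ → ℝ := fun j => (e j).untopD 0 with hrdef
      set S : ℝ := ∑ j ∈ range j₀, min 0 (r j) with hSdef
      have hQtop : Q P n k = ⊤ := by
        by_contra hne
        obtain ⟨m, hm⟩ := Q_ne_top_bound hne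
        set y : ℝ := max 0 (m - pn - S + 1) with hydef
        have hy0 : 0 ≤ y := le_max_left _ _
        have hy1 : m - pn - S + 1 ≤ y := le_max_right _ _
        -- lower bound for fr y
        have hfr : ((pn + S + ((n - j₀ : ℕ) : ℝ) * y : ℝ) : WithTop ℝ)
            ≤ ((fr P n y : ℝ) : WithTop ℝ) := by
          rw [hcoe y, hsplit y j₀ (by omega)]
          have h1 : ∀ j ∈ range j₀, ((min 0 (r j) : ℝ) : WithTop ℝ) ≤ min (↑y) (e j) := by
            intro j _
            rcases eq_or_ne (e j) ⊤ with h | h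
            · rw [h, min_eq_left le_top, WithTop.coe_le_coe]
              exact le_trans (min_le_left _ _) hy0
            obtain ⟨a, ha⟩ := WithTop.ne_top_iff_exists.mp h
            have hra : r j = a := by rw [hrdef]; simp [← ha]
            rw [← ha, ← WithTop.coe_min, WithTop.coe_le_coe, hra]
            exact min_le_min hy0 le_rfl
          have h2 : ∀ j ∈ Ico j₀ n, min (↑y : WithTop ℝ) (e j) = ((y : ℝ) : WithTop ℝ) := by
            intro j hj
            rw [Finset.mem_Ico] at hj
            have : e j = ⊤ := top_le_iff.mp (hej₀ ▸ hmo' hj.1)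
            rw [this, min_eq_left le_top]
          rw [Finset.sum_congr rfl h2, Finset.sum_const, Nat.card_Ico]
          have h4 : ((((n - j₀ : ℕ) : ℝ) * y : ℝ) : WithTop ℝ) = (n - j₀) • ((y : ℝ) : WithTop ℝ) := by
            rw [coe_mul_eq_sum, Finset.sum_const, card_range]
          calc ((pn + S + ((n - j₀ : ℕ) : ℝ) * y : ℝ) : WithTop ℝ)
              = ((pn : ℝ) : WithTop ℝ) + ((S : ℝ) : WithTop ℝ)
                + ((((n - j₀ : ℕ) : ℝ) * y : ℝ) : WithTop ℝ) := by
                rw [← WithTop.coe_add, ← WithTop.coe_add]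
            _ ≤ P n + ∑ j ∈ range j₀, min (↑y) (e j) + (n - j₀) • ((y : ℝ) : WithTop ℝ) := by
                rw [← hpn, ← h4]
                refine add_le_add (add_le_add le_rfl ?_) le_rfl
                rw [hSdef, WithTop.coe_sum]
                exact Finset.sum_le_sum h1
            _ = P n + (∑ j ∈ range j₀, min (↑y) (e j) + (n - j₀) • ((y : ℝ) : WithTop ℝ)) := by
                rw [add_assoc]
        rw [WithTop.coe_le_coe] at hfr
        have hmy := hm y
        have hcast : (k : ℝ) + 1 ≤ ((n - j₀ : ℕ) : ℝ) := by
          have h5 : k + 1 ≤ n - j₀ := by omega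
          have h6 : ((k + 1 : ℕ) : ℝ) ≤ ((n - j₀ : ℕ) : ℝ) := Nat.cast_le.mpr h5
          push_cast at h6
          linarith
        nlinarith [hy0, hy1, hmy, hfr]
      rw [hQtop]; exact le_top
    · -- bounded case
      push_neg at hc
      have hfin : ∀ j, j < n - k → e j ≠ ⊤ := hc
      have hj₁ : n - k - 1 < n - k := by omega
      obtain ⟨ys, hys⟩ := WithTop.ne_top_iff_exists.mp (hfin _ hj₁)
      have h1 : ∀ j ∈ range (n - k), min ((ys : ℝ) : WithTop ℝ) (e j) = e j := by
        intro j hj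
        rw [Finset.mem_range] at hj
        exact min_eq_right (hys ▸ hmo' (by omega))
      have h2 : ∀ j ∈ Ico (n - k) n, min ((ys : ℝ) : WithTop ℝ) (e j) = ((ys : ℝ) : WithTop ℝ) := by
        intro j hj
        rw [Finset.mem_Ico] at hj
        exact min_eq_left (hys ▸ hmo (by omega) hj.2)
      have hfr : ((fr P n ys : ℝ) : WithTop ℝ)
          = (P n + ∑ j ∈ range (n - k), e j) + (((k : ℝ) * ys : ℝ) : WithTop ℝ) := by
        have hnn : n - (n - k) = k := by omega
        rw [hcoe ys, hsplit ys (n - k) (by omega), Finset.sum_congr rfl h1,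
          Finset.sum_congr rfl h2, Finset.sum_const, Nat.card_Ico, hnn]
        rw [coe_mul_eq_sum, Finset.sum_const, card_range]
        rw [add_assoc]
      set t : ℝ := pn + ∑ j ∈ range (n - k), (e j).untopD 0 with htdef
      have hts : P n + ∑ j ∈ range (n - k), e j = ((t : ℝ) : WithTop ℝ) := by
        rw [htdef, WithTop.coe_add, WithTop.coe_sum, hpn]
        congr 1
        refine Finset.sum_congr rfl fun j hj => ?_
        rw [Finset.mem_range] at hj
        obtain ⟨a, ha⟩ := WithTop.ne_top_iff_exists.mp (hfin j hj)
        rw [← ha]; simp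
      rw [hts] at hfr ⊢
      rw [← WithTop.coe_add, WithTop.coe_eq_coe] at hfr
      have : t = fr P n ys - (k : ℝ) * ys := by linarith
      rw [this]
      exact le_Q k ys

end TropAux

namespace TropAux
open Finset

lemma coe_add_neg_cancel (a : ℝ) (x : WithTop ℝ) :
    (((a : ℝ) : WithTop ℝ) + x) + ((-a : ℝ) : WithTop ℝ) = x := by
  cases x with
  | top => rw [WithTop.add_top, WithTop.top_add]
  | coe b =>
    rw [← WithTop.coe_add, ← WithTop.coe_add, WithTop.coe_eq_coe]
    ring

variable {P : ℕ → WithTop ℝ} {n : ℕ} (hP : P n ≠ ⊤)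
include hP

lemma repr_eq_d {e : ℕ → WithTop ℝ}
    (hmo : ∀ ⦃j j' : ℕ⦄, j ≤ j' → j' < n → e j ≤ e j')
    (htop : ∀ j, n ≤ j → e j = ⊤)
    (he : ∀ y : ℝ, tropEval P n y = P n + ∑ j ∈ range n, min (↑y) (e j))
    {j : ℕ} (hj : j < n) : d P n j = e (n - 1 - j) := by
  set i := n - 1 - j with hidef
  have hin : i < n := by omega
  have hQ1 : Q P n (j + 1) = P n + ∑ j' ∈ range i, e j' := by
    rw [Q_of_repr hP hmo htop he (show j + 1 ≤ n by omega)]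
    have : n - (j + 1) = i := by omega
    rw [this]
  have hQ0 : Q P n j = Q P n (j + 1) + e i := by
    rw [Q_of_repr hP hmo htop he (le_of_lt hj)]
    have : n - j = i + 1 := by omega
    rw [this, Finset.sum_range_succ, hQ1, add_assoc]
  rcases eq_or_ne (Q P n (j + 1)) ⊤ with h | h
  · have hQj : Q P n j = ⊤ := Q_top_of hP hj h
    have hdj : d P n j = ⊤ := by rw [d, hQj, WithTop.top_add]
    have hsum : ∑ j' ∈ range i, e j' = ⊤ := by
      rcases WithTop.add_eq_top.mp (hQ1 ▸ h) with h' | h'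
      · exact absurd h' hP
      · exact h'
    obtain ⟨j', hj', hej'⟩ := WithTop.sum_eq_top.mp hsum
    rw [Finset.mem_range] at hj'
    have : e i = ⊤ := top_le_iff.mp (hej' ▸ hmo (le_of_lt hj') hin)
    rw [hdj, this]
  · obtain ⟨a, ha⟩ := WithTop.ne_top_iff_exists.mp h
    have hqa : q P n (j + 1) = a := by rw [q, ← ha]; simp
    rw [d, hqa, hQ0, ← ha, coe_add_neg_cancel]

end TropAux

/-- Cuninghame-Green–Meijer: any min-plus polynomial function of degree `n`
factors uniquely as `P_n + ∑ min(y, c_i)` with `c_1 ≤ ⋯ ≤ c_n`. -/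
theorem stmt_0 (n : ℕ) (P : ℕ → WithTop ℝ) (hP : P n ≠ ⊤) :
    ∃! c : Fin n → WithTop ℝ, Monotone c ∧
      ∀ y : ℝ, tropEval P n y = P n + ∑ i : Fin n, min (y : WithTop ℝ) (c i) := by
  classical
  refine ⟨fun i => TropAux.d P n (n - 1 - ↑i), ⟨?_, ?_⟩, ?_⟩
  · intro i i' hii
    have hii' : (i : ℕ) ≤ (i' : ℕ) := hii
    have h1 : (n - 1 - (i' : ℕ)) ≤ n - 1 - (i : ℕ) := by omega
    exact TropAux.d_anti hP h1 (by have := i.isLt; omega)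
  · intro y
    rw [TropAux.eval_eq_d hP y]
    congr 1
    rw [← Finset.sum_range_reflect (fun j => min (↑y) (TropAux.d P n j)) n]
    exact (Fin.sum_univ_eq_sum_range
      (fun j => min (↑y : WithTop ℝ) (TropAux.d P n (n - 1 - j))) n).symm
  · rintro c' ⟨hm, he⟩
    funext i
    set e : ℕ → WithTop ℝ := fun j => if h : j < n then c' ⟨j, h⟩ else ⊤ with hedef
    have hce : ∀ i : Fin n, e (i : ℕ) = c' i := by
      intro i
      rw [hedef]
      simp only [i.isLt, dif_pos, Fin.eta]
    have hmo : ∀ ⦃j j' : ℕ⦄, j ≤ j' → j' < n → e j ≤ e j' := by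
      intro j j' hjj hj'
      have hjn : j < n := lt_of_le_of_lt hjj hj'
      rw [hedef]
      simp only [hjn, hj', dif_pos]
      exact hm (show (⟨j, hjn⟩ : Fin n) ≤ ⟨j', hj'⟩ from hjj)
    have htop : ∀ j, n ≤ j → e j = ⊤ := fun j hj => by
      rw [hedef]; exact dif_neg (by omega)
    have hee : ∀ y : ℝ, tropEval P n y = P n + ∑ j ∈ Finset.range n, min (↑y) (e j) := by
      intro y
      rw [he y]
      congr 1
      rw [← Fin.sum_univ_eq_sum_range (fun j => min (↑y : WithTop ℝ) (e j)) n]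
      exact Finset.sum_congr rfl fun i _ => by rw [hce i]
    have hix : n - 1 - (n - 1 - (i : ℕ)) = (i : ℕ) := by have := i.isLt; omega
    have := TropAux.repr_eq_d hP hmo htop hee (show n - 1 - (i : ℕ) < n by have := i.isLt; omega)
    rw [hix] at this
    rw [← hce i, ← this]
end

section
/- The finite tropical roots of a formal min-plus polynomial P coincide with the opposites of the slopes of the affine pieces of the lower convex hull of the points \((k,P_k)\) for \(\mathrm{val}\,P\le k\le \deg P\), and the multiplicity of a root c equals the horizontal length of the interval on which this convex hull has slope \(-c\). -/
open scoped Classical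

lemma sum_min_le_aux {ι : Type*} (F : Finset ι) (B : ι → ℝ) (y ys : ℝ) (t : ℕ) (v z : ℝ)
    (hle : ((F.filter fun i => ys < B i).card : ℝ) ≤ t)
    (hge : ((t : ℝ) + 1) ≤ ((F.filter fun i => ys ≤ B i).card : ℝ))
    (hz1 : v + t ≤ z) (hz2 : z ≤ v + t + 1) :
    (∑ i ∈ F, min y (B i)) + (v - z) * y ≤ (∑ i ∈ F, min ys (B i)) + (v - z) * ys := by
  rcases le_or_gt ys y with hy | hy
  · have hsum : (∑ i ∈ F, min y (B i)) - (∑ i ∈ F, min ys (B i))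
        ≤ ((F.filter fun i => ys < B i).card : ℝ) * (y - ys) := by
      rw [← Finset.sum_sub_distrib]
      calc (∑ i ∈ F, (min y (B i) - min ys (B i)))
          ≤ ∑ i ∈ F, (if ys < B i then (y - ys) else 0) := by
            apply Finset.sum_le_sum
            intro i _
            by_cases h : ys < B i
            · simp only [h, if_true]
              have h2 : min ys (B i) = ys := min_eq_left h.le
              have h3 : min y (B i) ≤ y := min_le_left _ _
              rw [h2]; linarith
            · simp only [h, if_false]
              push_neg at h
              rw [min_eq_right h, min_eq_right (h.trans hy)]
              simp
        _ = ((F.filter fun i => ys < B i).card : ℝ) * (y - ys) := by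
            rw [← Finset.sum_filter, Finset.sum_const, nsmul_eq_mul]
    have h1 : ((F.filter fun i => ys < B i).card : ℝ) * (y - ys) ≤ t * (y - ys) :=
      mul_le_mul_of_nonneg_right hle (by linarith)
    nlinarith [mul_nonneg (sub_nonneg.2 hy) (sub_nonneg.2 (by linarith : v + (t:ℝ) ≤ z))]
  · have hsum : (∑ i ∈ F, min y (B i)) - (∑ i ∈ F, min ys (B i))
        ≤ ((F.filter fun i => ys ≤ B i).card : ℝ) * (y - ys) := by
      rw [← Finset.sum_sub_distrib]
      calc (∑ i ∈ F, (min y (B i) - min ys (B i)))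
          ≤ ∑ i ∈ F, (if ys ≤ B i then (y - ys) else 0) := by
            apply Finset.sum_le_sum
            intro i _
            by_cases h : ys ≤ B i
            · simp only [h, if_true]
              rw [min_eq_left (hy.le.trans h), min_eq_left h]
            · simp only [h, if_false]
              push_neg at h
              rw [min_eq_right h.le]
              have h3 : min y (B i) ≤ B i := min_le_right _ _
              linarith
        _ = ((F.filter fun i => ys ≤ B i).card : ℝ) * (y - ys) := by
            rw [← Finset.sum_filter, Finset.sum_const, nsmul_eq_mul]
    have h1 : ((F.filter fun i => ys ≤ B i).card : ℝ) * (y - ys) ≤ ((t:ℝ)+1) * (y - ys) :=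
      mul_le_mul_of_nonpos_right hge (by linarith)
    nlinarith [mul_nonneg (sub_nonneg.2 hy.le) (sub_nonneg.2 (by linarith : z ≤ v + (t:ℝ)+1))]

noncomputable def vexFn (P : ℕ → WithTop ℝ) (n : ℕ) (x : ℝ) : ℝ :=
  sSup {t : ℝ | ∃ α β : ℝ,
    (∀ k ≤ n, ∀ r : ℝ, P k = (r : WithTop ℝ) → α * (k : ℝ) + β ≤ r) ∧ t = α * x + β}

set_option maxHeartbeats 2000000 in
/-- The finite tropical roots of `P` are the opposites of the slopes of the affine
pieces of the Newton polygon of `P`, and the multiplicity of a root is the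
horizontal length of the interval on which the convex hull has that slope:
`x` is a root of multiplicity `m ≥ 1` iff the convex hull `vex P` is affine with
slope `-x` exactly on some interval `[x₀, x₀ + m] ⊆ [val P, deg P]`. -/
theorem stmt_2 (n v : ℕ) (P : ℕ → WithTop ℝ) (hdeg : P n ≠ ⊤) (hval : P v ≠ ⊤)
    (hlow : ∀ k < v, P k = ⊤) (hvn : v ≤ n)
    (c : Fin n → WithTop ℝ) (hc : Monotone c)
    (hfact : ∀ y : ℝ, tropEval P n y = P n + ∑ i : Fin n, min (y : WithTop ℝ) (c i))
    (x : ℝ) (m : ℕ) :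
    ((Finset.univ.filter fun i : Fin n => c i = (x : WithTop ℝ)).card = m ∧ 0 < m) ↔
    (0 < m ∧ ∃ x₀ : ℝ, (v : ℝ) ≤ x₀ ∧ x₀ + (m : ℝ) ≤ (n : ℝ) ∧
      (∀ z ∈ Set.Icc x₀ (x₀ + (m : ℝ)), vexFn P n z = vexFn P n x₀ - x * (z - x₀)) ∧
      (∀ z ∈ Set.Icc (v : ℝ) (n : ℝ), z < x₀ ∨ x₀ + (m : ℝ) < z →
        vexFn P n x₀ - x * (z - x₀) < vexFn P n z)) := by
  classical
  obtain ⟨pn, hpn⟩ := WithTop.ne_top_iff_exists.mp hdeg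
  obtain ⟨pv, hpv⟩ := WithTop.ne_top_iff_exists.mp hval
  set h : ℝ → ℝ := fun y => (tropEval P n y).untopD 0 with hh
  have tle : ∀ (y : ℝ) (k : ℕ), k ≤ n → tropEval P n y ≤ P k + (((k:ℝ) * y : ℝ) : WithTop ℝ) := by
    intro y k hk
    exact Finset.inf_le (Finset.mem_range.mpr (by omega))
  have tne : ∀ y : ℝ, tropEval P n y ≠ ⊤ := by
    intro y htop
    have h1 := tle y n le_rfl
    rw [htop, top_le_iff, WithTop.add_eq_top] at h1
    rcases h1 with h1 | h1
    · exact hdeg h1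
    · exact WithTop.coe_ne_top h1
  have hcoe : ∀ y : ℝ, (h y : WithTop ℝ) = tropEval P n y := by
    intro y
    obtain ⟨r, hr⟩ := WithTop.ne_top_iff_exists.mp (tne y)
    simp only [hh, ← hr, WithTop.untopD_coe]
  have hle_v : ∀ y : ℝ, h y ≤ pv + v * y := by
    intro y
    have h1 := tle y v hvn
    rw [← hcoe y, ← hpv, ← WithTop.coe_add, WithTop.coe_le_coe] at h1
    exact h1
  have hle_n : ∀ y : ℝ, h y ≤ pn + n * y := by
    intro y
    have h1 := tle y n le_rfl
    rw [← hcoe y, ← hpn, ← WithTop.coe_add, WithTop.coe_le_coe] at h1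
    exact h1
  set G : ℝ → ℝ := fun z => sSup (Set.range fun y => h y - z * y) with hG
  have hbdd : ∀ z : ℝ, (v:ℝ) ≤ z → z ≤ n → BddAbove (Set.range fun y => h y - z * y) := by
    intro z hz1 hz2
    refine ⟨max pv pn, ?_⟩
    rintro _ ⟨y, rfl⟩
    rcases le_or_gt 0 y with hy | hy
    · have h2 : h y - z * y ≤ pv := by
        nlinarith [hle_v y, mul_nonneg (sub_nonneg.2 hz1) hy]
      exact h2.trans (le_max_left _ _)
    · have h2 : h y - z * y ≤ pn := by
        nlinarith [hle_n y, mul_nonneg (sub_nonneg.2 hz2) (le_of_lt (neg_pos.2 hy))]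
      exact h2.trans (le_max_right _ _)
  have hG_ge : ∀ z : ℝ, (v:ℝ) ≤ z → z ≤ n → ∀ y, h y - z * y ≤ G z := by
    intro z hz1 hz2 y
    exact le_csSup (hbdd z hz1 hz2) ⟨y, rfl⟩
  have hG_eq_of_max : ∀ z ys : ℝ, (∀ y, h y - z * y ≤ h ys - z * ys) → G z = h ys - z * ys := by
    intro z ys hmax
    apply le_antisymm
    · exact csSup_le ⟨_, ⟨0, rfl⟩⟩ (by rintro _ ⟨y, rfl⟩; exact hmax y)
    · exact le_csSup ⟨_, by rintro _ ⟨y, rfl⟩; exact hmax y⟩ ⟨ys, rfl⟩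
  have hvex : ∀ z : ℝ, (v:ℝ) ≤ z → z ≤ n → vexFn P n z = G z := by
    intro z hz1 hz2
    apply csSup_eq_csSup_of_forall_exists_le
    · rintro tt ⟨α, β, hαβ, rfl⟩
      refine ⟨h (-α) - z * (-α), ⟨-α, rfl⟩, ?_⟩
      have hβ : β ≤ h (-α) := by
        obtain ⟨k, hk, hkeq⟩ := Finset.exists_mem_eq_inf (Finset.range (n+1))
          ⟨0, by simp⟩ (fun k => P k + (((k:ℝ) * (-α) : ℝ) : WithTop ℝ))
        have hkeq' : tropEval P n (-α) = P k + (((k:ℝ) * (-α) : ℝ) : WithTop ℝ) := hkeq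
        have hk' : k ≤ n := by have := Finset.mem_range.mp hk; omega
        have hPk : P k ≠ ⊤ := by
          intro htop
          apply tne (-α)
          rw [hkeq', htop]
          simp
        obtain ⟨r, hr⟩ := WithTop.ne_top_iff_exists.mp hPk
        have h1 := hαβ k hk' r hr.symm
        have h2 : (h (-α) : WithTop ℝ) = ((r + (k:ℝ) * (-α) : ℝ) : WithTop ℝ) := by
          rw [hcoe, hkeq', ← hr, ← WithTop.coe_add]
        have h3 : h (-α) = r + (k:ℝ) * (-α) := WithTop.coe_injective h2
        linarith [h1, h3]
      have hring : z * -α = -(α * z) := by ring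
      linarith
    · rintro tt ⟨y, rfl⟩
      refine ⟨h y - z * y, ⟨-y, h y, ?_, by ring⟩, le_rfl⟩
      intro k hk r hr
      have h1 := tle y k hk
      rw [← hcoe y, hr, ← WithTop.coe_add, WithTop.coe_le_coe] at h1
      linarith
  -- ### coefficient structure
  set F : Finset (Fin n) := Finset.univ.filter (fun i => c i ≠ ⊤) with hF
  set B : Fin n → ℝ := fun i => (c i).untopD 0 with hB
  have hmemF : ∀ i : Fin n, i ∈ F ↔ c i ≠ ⊤ := by
    intro i; rw [hF]; simp
  have hcB : ∀ i ∈ F, (B i : WithTop ℝ) = c i := by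
    intro i hi
    rw [hmemF] at hi
    obtain ⟨r, hr⟩ := WithTop.ne_top_iff_exists.mp hi
    simp only [hB, ← hr, WithTop.untopD_coe]
  have hwcard : (Finset.univ.filter (fun i : Fin n => ¬ c i ≠ ⊤)).card = n - F.card := by
    have h1 := Finset.card_filter_add_card_filter_not (s := (Finset.univ : Finset (Fin n)))
      (p := fun i => c i ≠ ⊤)
    rw [Finset.card_univ, Fintype.card_fin] at h1
    rw [hF]; omega
  have hfml : ∀ y : ℝ, h y = pn + (∑ i ∈ F, min y (B i)) + ((n - F.card : ℕ) : ℝ) * y := by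
    intro y
    apply WithTop.coe_injective
    rw [hcoe, hfact]
    rw [← Finset.sum_filter_add_sum_filter_not Finset.univ (fun i => c i ≠ ⊤)
      (fun i => min (y : WithTop ℝ) (c i))]
    have e1 : ∑ i ∈ Finset.univ.filter (fun i : Fin n => c i ≠ ⊤), min (y : WithTop ℝ) (c i)
        = ((∑ i ∈ F, min y (B i) : ℝ) : WithTop ℝ) := by
      rw [WithTop.coe_sum, hF]
      apply Finset.sum_congr rfl
      intro i hi
      rw [← hcB i (by exact hi), ← WithTop.coe_min]
    have e2 : ∑ i ∈ Finset.univ.filter (fun i : Fin n => ¬ c i ≠ ⊤), min (y : WithTop ℝ) (c i)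
        = ((((n - F.card : ℕ) : ℝ) * y : ℝ) : WithTop ℝ) := by
      have e3 : ∀ i ∈ Finset.univ.filter (fun i : Fin n => ¬ c i ≠ ⊤),
          min (y : WithTop ℝ) (c i) = ((y : ℝ) : WithTop ℝ) := by
        intro i hi
        simp only [Finset.mem_filter, not_not] at hi
        rw [hi.2]
        exact min_eq_left le_top
      rw [Finset.sum_congr rfl e3, ← WithTop.coe_sum, Finset.sum_const, nsmul_eq_mul, hwcard]
    rw [e1, e2, ← hpn, ← WithTop.coe_add, ← WithTop.coe_add]
    congr 1
    ring
  -- ### number of infinite roots is v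
  have hFcard : F.card = n - v := by
    -- choose Y beyond all break points
    set g : ℕ → ℝ := fun k => if v < k then (pv - (P k).untopD 0) / ((k : ℝ) - (v : ℝ)) else 0 with hg
    set SY : Finset ℝ := insert (0:ℝ) ((F.image B) ∪ ((Finset.range (n+1)).image g)) with hSY
    have hSYne : SY.Nonempty := ⟨0, by simp [hSY]⟩
    set Y : ℝ := SY.max' hSYne with hYdef
    have hYB : ∀ i ∈ F, B i ≤ Y := by
      intro i hi
      apply Finset.le_max'
      simp only [hSY, Finset.mem_insert, Finset.mem_union]
      exact Or.inr (Or.inl (Finset.mem_image_of_mem B hi))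
    have hYg : ∀ k ≤ n, g k ≤ Y := by
      intro k hk
      apply Finset.le_max'
      simp only [hSY, Finset.mem_insert, Finset.mem_union]
      exact Or.inr (Or.inr (Finset.mem_image_of_mem g (Finset.mem_range.mpr (by omega))))
    have hasymp : ∀ y : ℝ, Y ≤ y → h y = pv + v * y := by
      intro y hy
      apply WithTop.coe_injective
      rw [hcoe]
      apply le_antisymm
      · have h1 := tle y v hvn
        rw [← hpv, ← WithTop.coe_add] at h1
        exact h1
      · apply Finset.le_inf
        intro k hk
        have hk' : k ≤ n := by have := Finset.mem_range.mp hk; omega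
        rcases lt_or_ge k v with hkv | hkv
        · rw [hlow k hkv]; simp
        · rcases eq_or_ne (P k) ⊤ with htop | htop
          · rw [htop]; simp
          · obtain ⟨r, hr⟩ := WithTop.ne_top_iff_exists.mp htop
            rw [← hr, ← WithTop.coe_add, WithTop.coe_le_coe]
            rcases eq_or_lt_of_le hkv with hkv' | hkv'
            · have : pv = r := by
                have : (pv : WithTop ℝ) = (r : WithTop ℝ) := by rw [hpv, hr, ← hkv']
                exact_mod_cast this
              rw [← hkv', this]
            · have hgk : g k ≤ y := le_trans (hYg k hk') hy
              rw [hg] at hgk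
              simp only [hkv', if_true] at hgk
              have hden : (0:ℝ) < (k : ℝ) - (v : ℝ) := by
                have : (v:ℝ) < k := by exact_mod_cast hkv'
                linarith
              rw [div_le_iff₀ hden] at hgk
              have hPk : (P k).untopD 0 = r := by rw [← hr]; simp
              rw [hPk] at hgk
              nlinarith
    have e1 := hfml Y
    have e2 := hfml (Y + 1)
    rw [hasymp Y le_rfl] at e1
    rw [hasymp (Y+1) (by linarith)] at e2
    have e3 : ∀ y : ℝ, Y ≤ y → (∑ i ∈ F, min y (B i)) = ∑ i ∈ F, B i := by
      intro y hy
      apply Finset.sum_congr rfl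
      intro i hi
      exact min_eq_right ((hYB i hi).trans hy)
    rw [e3 Y le_rfl] at e1
    rw [e3 (Y+1) (by linarith)] at e2
    have : ((v:ℕ) : ℝ) = ((n - F.card : ℕ) : ℝ) := by linarith
    have hvw : v = n - F.card := by exact_mod_cast this
    have hFle : F.card ≤ n := by simpa using Finset.card_le_univ F
    omega
  set j : ℕ := n - v with hj
  have hjn : j ≤ n := by omega
  have hFdc : ∀ i i' : Fin n, i ≤ i' → i' ∈ F → i ∈ F := by
    intro i i' hii hi'
    rw [hmemF] at hi' ⊢
    exact ne_top_of_le_ne_top hi' (hc hii)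
  have hFiff : ∀ i : Fin n, i ∈ F ↔ (i : ℕ) < j := by
    intro i
    constructor
    · intro hi
      by_contra hcon
      push_neg at hcon
      have hsub : Finset.Iic i ⊆ F := by
        intro i' hi'
        exact hFdc i' i (Finset.mem_Iic.mp hi') hi
      have := Finset.card_le_card hsub
      rw [Fin.card_Iic, hFcard] at this
      omega
    · intro hi
      by_contra hcon
      have hsub : F ⊆ Finset.Iio i := by
        intro i' hi'
        rw [Finset.mem_Iio]
        rcases lt_or_ge i' i with h1 | h1
        · exact h1
        · exact absurd (hFdc i i' h1 hi') hcon
      have := Finset.card_le_card hsub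
      rw [Fin.card_Iio, hFcard] at this
      omega
  have hBmono : ∀ i i' : Fin n, i ≤ i' → i' ∈ F → B i ≤ B i' := by
    intro i i' hii hi'
    have hi : i ∈ F := hFdc i i' hii hi'
    rw [← WithTop.coe_le_coe, hcB i hi, hcB i' hi']
    exact hc hii
  set q : ℕ → ℝ := fun t => if hlt : j - 1 - t < n then B ⟨j - 1 - t, hlt⟩ else 0 with hq
  have hq_eq : ∀ t, t < j → ∃ i : Fin n, (i : ℕ) = j - 1 - t ∧ q t = B i ∧ i ∈ F := by
    intro t ht
    have hlt : j - 1 - t < n := by omega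
    refine ⟨⟨j - 1 - t, hlt⟩, rfl, ?_, ?_⟩
    · simp only [hq, dif_pos hlt]
    · rw [hFiff]; simp; omega
  have hq_anti : ∀ t t', t ≤ t' → t' < j → q t' ≤ q t := by
    intro t t' htt ht'
    obtain ⟨i', hi'val, hi'q, hi'F⟩ := hq_eq t' ht'
    obtain ⟨i, hival, hiq, hiF⟩ := hq_eq t (by omega)
    rw [hiq, hi'q]
    exact hBmono i' i (by rw [Fin.le_def]; omega) hiF
  set R : Finset ℕ := (Finset.range j).filter (fun t => q t = x) with hR
  have hcardR : (Finset.univ.filter fun i : Fin n => c i = (x : WithTop ℝ)).card = R.card := by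
    rcases Nat.eq_zero_or_pos j with hj0 | hj0
    · have hRe : R = ∅ := by rw [hR, hj0]; simp
      have hFe : (Finset.univ.filter fun i : Fin n => c i = (x : WithTop ℝ)) = ∅ := by
        apply Finset.eq_empty_of_forall_notMem
        intro i hi
        have hix : c i = (x : WithTop ℝ) := (Finset.mem_filter.mp hi).2
        have hiF : i ∈ F := by rw [hmemF, hix]; exact WithTop.coe_ne_top
        have := (hFiff i).mp hiF
        omega
      rw [hRe, hFe]
      simp
    · have hn0 : 0 < n := by omega
      refine Finset.card_nbij' (fun (i : Fin n) => j - 1 - (i : ℕ))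
        (fun t => (⟨(j - 1 - t) % n, Nat.mod_lt _ hn0⟩ : Fin n)) ?_ ?_ ?_ ?_
      · intro i hi
        dsimp only
        have hix : c i = (x : WithTop ℝ) := (Finset.mem_filter.mp hi).2
        have hiF : i ∈ F := by rw [hmemF, hix]; exact WithTop.coe_ne_top
        have hij : (i : ℕ) < j := (hFiff i).mp hiF
        rw [Finset.mem_coe, hR, Finset.mem_filter, Finset.mem_range]
        refine ⟨by omega, ?_⟩
        obtain ⟨i', hi'val, hi'q, _⟩ := hq_eq (j - 1 - (i : ℕ)) (by omega)
        have hii' : i' = i := Fin.ext (by omega)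
        rw [hi'q, hii']
        have : (B i : WithTop ℝ) = (x : WithTop ℝ) := by rw [hcB i hiF, hix]
        exact_mod_cast this
      · intro t ht
        rw [Finset.mem_coe, hR, Finset.mem_filter, Finset.mem_range] at ht
        obtain ⟨htj, htq⟩ := ht
        obtain ⟨i', hi'val, hi'q, hi'F⟩ := hq_eq t htj
        dsimp only
        rw [Finset.mem_coe, Finset.mem_filter]
        refine ⟨Finset.mem_univ _, ?_⟩
        have hmod : (j - 1 - t) % n = j - 1 - t := Nat.mod_eq_of_lt (by omega)
        have heq : (⟨(j - 1 - t) % n, Nat.mod_lt _ hn0⟩ : Fin n) = i' := Fin.ext (by simp only [hmod]; omega)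
        rw [heq, ← hcB i' hi'F, ← hi'q, htq]
      · intro i hi
        have hix : c i = (x : WithTop ℝ) := (Finset.mem_filter.mp hi).2
        have hiF : i ∈ F := by rw [hmemF, hix]; exact WithTop.coe_ne_top
        have hij : (i : ℕ) < j := (hFiff i).mp hiF
        refine Fin.ext ?_
        show (j - 1 - (j - 1 - (i : ℕ))) % n = (i : ℕ)
        rw [Nat.mod_eq_of_lt (by omega)]
        omega
      · intro t ht
        rw [Finset.mem_coe, hR, Finset.mem_filter, Finset.mem_range] at ht
        show j - 1 - ((j - 1 - t) % n) = t
        rw [Nat.mod_eq_of_lt (by omega)]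
        omega
  have hpiece : ∀ t, t < j → ∀ z : ℝ, (v:ℝ) + t ≤ z → z ≤ (v:ℝ) + t + 1 →
      G z = h (q t) - z * (q t) := by
    intro t ht z hz1 hz2
    obtain ⟨it, hitval, hitq, hitF⟩ := hq_eq t ht
    have hcard1 : (((F.filter fun i => q t < B i).card : ℕ) : ℝ) ≤ (t : ℝ) := by
      have hsub : (F.filter fun i => q t < B i).card ≤ t := by
        have h1 : (F.filter fun i => q t < B i).card ≤ (Finset.Ico (j - t) j).card := by
          apply Finset.card_le_card_of_injOn (fun (i : Fin n) => (i : ℕ))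
          · intro i hi
            rw [Finset.mem_coe, Finset.mem_filter] at hi
            obtain ⟨hiF2, hiq⟩ := hi
            rw [Finset.mem_coe, Finset.mem_Ico]
            have hij : (i : ℕ) < j := (hFiff i).mp hiF2
            constructor
            · by_contra hcon
              push_neg at hcon
              have : i ≤ it := by rw [Fin.le_def]; omega
              have := hBmono i it this hitF
              rw [← hitq] at this
              linarith
            · exact hij
          · intro a _ b _ hab
            exact Fin.ext hab
        rw [Nat.card_Ico] at h1
        omega
      exact_mod_cast hsub
    have hcard2 : (t : ℝ) + 1 ≤ (((F.filter fun i => q t ≤ B i).card : ℕ) : ℝ) := by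
      have hsub : t + 1 ≤ (F.filter fun i => q t ≤ B i).card := by
        have h1 : (Finset.Ico (j - 1 - t) j).card ≤ (F.filter fun i => q t ≤ B i).card := by
          apply Finset.card_le_card_of_injOn (fun k => (⟨k % n, Nat.mod_lt _ (by omega)⟩ : Fin n))
          · intro k hk
            rw [Finset.mem_coe, Finset.mem_Ico] at hk
            have hkn : k < n := by omega
            have hmod : k % n = k := Nat.mod_eq_of_lt hkn
            rw [Finset.mem_coe, Finset.mem_filter]
            have hkF : (⟨k % n, Nat.mod_lt _ (by omega)⟩ : Fin n) ∈ F := by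
              rw [hFiff]; simp [hmod]; omega
            refine ⟨hkF, ?_⟩
            rw [hitq]
            apply hBmono it _ _ hkF
            rw [Fin.le_def]
            simp [hmod]
            omega
          · intro a ha b hb hab
            simp only [Finset.coe_Ico, Set.mem_Ico] at ha hb
            have : a % n = b % n := by
              have := congrArg Fin.val hab
              simpa using this
            rw [Nat.mod_eq_of_lt (by omega), Nat.mod_eq_of_lt (by omega)] at this
            exact this
        rw [Nat.card_Ico] at h1
        omega
      exact_mod_cast hsub
    apply hG_eq_of_max
    intro y
    rw [hfml y, hfml (q t)]
    have hw : ((n - F.card : ℕ) : ℝ) = (v : ℝ) := by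
      rw [hFcard]
      congr 1
      omega
    rw [hw]
    have key := sum_min_le_aux F B y (q t) t (v:ℝ) z hcard1 hcard2 hz1 hz2
    linarith
  have hjcast : (v:ℝ) + (j:ℝ) = (n:ℝ) := by
    have : v + j = n := by omega
    exact_mod_cast this
  -- ### canonical interval from a nonempty root set
  have hmain : R.Nonempty → ∃ t₀ : ℕ, t₀ < j ∧ t₀ + R.card ≤ j ∧
      (∀ z : ℝ, (v:ℝ) + t₀ ≤ z → z ≤ (v:ℝ) + t₀ + R.card → G z = h x - z * x) ∧
      (∀ z : ℝ, (v:ℝ) ≤ z → z ≤ (n:ℝ) → (z < (v:ℝ) + t₀ ∨ (v:ℝ) + t₀ + R.card < z) →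
        h x - z * x < G z) := by
    intro hRne
    set mR : ℕ := R.card with hmR
    have hmR0 : 0 < mR := Finset.card_pos.mpr hRne
    set t₀ : ℕ := R.min' hRne with ht₀
    set t₁ : ℕ := R.max' hRne with ht₁
    have ht₀R : t₀ ∈ R := R.min'_mem hRne
    have ht₁R : t₁ ∈ R := R.max'_mem hRne
    have ht₀j : t₀ < j := Finset.mem_range.mp (Finset.mem_filter.mp ht₀R).1
    have ht₁j : t₁ < j := Finset.mem_range.mp (Finset.mem_filter.mp ht₁R).1
    have hq₀ : q t₀ = x := (Finset.mem_filter.mp ht₀R).2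
    have hq₁ : q t₁ = x := (Finset.mem_filter.mp ht₁R).2
    have hmemR : ∀ t, t ∈ R ↔ (t₀ ≤ t ∧ t ≤ t₁) := by
      intro t
      constructor
      · intro ht; exact ⟨R.min'_le t ht, R.le_max' t ht⟩
      · rintro ⟨h1, h2⟩
        rw [hR, Finset.mem_filter, Finset.mem_range]
        refine ⟨by omega, ?_⟩
        have hle1 := hq_anti t₀ t h1 (by omega)
        have hle2 := hq_anti t t₁ h2 ht₁j
        rw [hq₀] at hle1
        rw [hq₁] at hle2
        linarith
    have hReq : R = Finset.Icc t₀ t₁ := by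
      ext t
      rw [hmemR, Finset.mem_Icc]
    have ht₁eq : t₁ = t₀ + mR - 1 := by
      have hcc : R.card = t₁ + 1 - t₀ := by rw [hReq, Nat.card_Icc]
      omega
    have htm : t₀ + mR ≤ j := by omega
    have hqt : ∀ t, t₀ ≤ t → t < t₀ + mR → q t = x := by
      intro t h1 h2
      exact (Finset.mem_filter.mp ((hmemR t).mpr ⟨h1, by omega⟩)).2
    have haff : ∀ z : ℝ, (v:ℝ) + t₀ ≤ z → z ≤ (v:ℝ) + t₀ + mR → G z = h x - z * x := by
      intro z hz1 hz2
      set t : ℕ := min (t₀ + mR - 1) ⌊z - (v:ℝ)⌋₊ with htdef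
      have hznn : (0:ℝ) ≤ z - v := by
        have : (0:ℝ) ≤ (t₀:ℝ) := Nat.cast_nonneg _
        linarith
      have hfl : t₀ ≤ ⌊z - (v:ℝ)⌋₊ := Nat.le_floor (by linarith)
      have ht1 : t₀ ≤ t := by omega
      have ht2 : t ≤ t₀ + mR - 1 := min_le_left _ _
      have htj : t < j := by omega
      have hcast1 : (t:ℝ) ≤ z - v := by
        have h1 : (t:ℕ) ≤ ⌊z - (v:ℝ)⌋₊ := min_le_right _ _
        have h2 : ((t:ℕ):ℝ) ≤ (⌊z - (v:ℝ)⌋₊ : ℝ) := Nat.cast_le.mpr h1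
        linarith [Nat.floor_le hznn]
      have hcast2 : z ≤ (v:ℝ) + t + 1 := by
        rcases le_or_gt (t₀ + mR - 1) ⌊z - (v:ℝ)⌋₊ with hcc | hcc
        · have hteq : t = t₀ + mR - 1 := by omega
          have : ((t:ℕ):ℝ) = (t₀:ℝ) + (mR:ℝ) - 1 := by
            rw [hteq]
            push_cast [Nat.cast_sub (by omega : 1 ≤ t₀ + mR)]
            ring
          linarith
        · have hteq : t = ⌊z - (v:ℝ)⌋₊ := by omega
          have := Nat.lt_floor_add_one (z - (v:ℝ))
          rw [← hteq] at this
          linarith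
      have := hpiece t htj z (by linarith) hcast2
      rw [hqt t ht1 (by omega)] at this
      exact this
    refine ⟨t₀, ht₀j, htm, haff, ?_⟩
    intro z hzv hzn hcase
    rcases hcase with hlt | hgt
    · -- z < v + t₀
      set t : ℕ := ⌊z - (v:ℝ)⌋₊ with htdef
      have hznn : (0:ℝ) ≤ z - v := by linarith
      have ht_le : (t:ℝ) ≤ z - v := Nat.floor_le hznn
      have ht_up : z - v < (t:ℝ) + 1 := Nat.lt_floor_add_one _
      have httt : t < t₀ := by
        by_contra hcon
        push_neg at hcon
        have : (t₀:ℝ) ≤ (t:ℝ) := Nat.cast_le.mpr hcon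
        linarith
      have htj : t < j := by omega
      have hqx : x < q t := by
        have h1 : q t₀ ≤ q t := hq_anti t t₀ (le_of_lt httt) ht₀j
        rw [hq₀] at h1
        rcases eq_or_lt_of_le h1 with he | hl
        · exfalso
          have : t ∈ R := by
            rw [hR, Finset.mem_filter, Finset.mem_range]
            exact ⟨htj, he.symm⟩
          have := ((hmemR t).mp this).1
          omega
        · exact hl
      have hwn : ((v:ℝ) + t + 1) ≤ (n:ℝ) := by
        have h1 : ((t:ℕ):ℝ) + 1 ≤ (j:ℝ) := by exact_mod_cast (by omega : t + 1 ≤ j)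
        linarith
      have hwv : (v:ℝ) ≤ (v:ℝ) + t + 1 := by
        have : (0:ℝ) ≤ (t:ℝ) := Nat.cast_nonneg _
        linarith
      have hw := hpiece t htj ((v:ℝ) + t + 1) (by linarith) le_rfl
      have hB2 : h x - ((v:ℝ)+t+1) * x ≤ h (q t) - ((v:ℝ)+t+1) * q t := by
        rw [← hw]
        exact hG_ge _ hwv hwn x
      have hA := hG_ge z hzv hzn (q t)
      have hprod : 0 < (((v:ℝ)+t+1) - z) * (q t - x) :=
        mul_pos (by linarith) (by linarith)
      linarith [hA, hB2, hprod]
    · -- v + t₀ + mR < z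
      have hz0 : (0:ℝ) < z - v := by
        have h0 : (0:ℝ) ≤ (t₀:ℝ) := Nat.cast_nonneg _
        have h1 : (1:ℝ) ≤ (mR:ℝ) := by exact_mod_cast hmR0
        linarith
      set C : ℕ := ⌈z - (v:ℝ)⌉₊ with hC
      have hC1 : 1 ≤ C := Nat.one_le_ceil_iff.mpr hz0
      set t : ℕ := C - 1 with htdef
      have htC : ((t:ℕ):ℝ) = (C:ℝ) - 1 := by
        rw [htdef]
        push_cast [Nat.cast_sub hC1]
        ring
      have ht_up : z - v ≤ (t:ℝ) + 1 := by
        have := Nat.le_ceil (z - (v:ℝ))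
        rw [htC]; linarith
      have ht_lt : (t:ℝ) < z - v := by
        have := Nat.ceil_lt_add_one (le_of_lt hz0)
        rw [htC]; linarith
      have htm' : t₀ + mR ≤ t := by
        have h1 : ((t₀ + mR : ℕ):ℝ) < (t:ℝ) + 1 := by push_cast; linarith
        have h2 : ((t₀ + mR : ℕ):ℝ) < ((t + 1 : ℕ):ℝ) := by push_cast; push_cast at h1; linarith
        have := Nat.cast_lt.mp h2
        omega
      have htj : t < j := by
        have h1 : (t:ℝ) < (j:ℝ) := by linarith
        exact_mod_cast h1
      have hqx : q t < x := by
        have h1 : q t ≤ q (t₀ + mR - 1) := hq_anti (t₀ + mR - 1) t (by omega) htj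
        rw [hqt (t₀ + mR - 1) (by omega) (by omega)] at h1
        rcases eq_or_lt_of_le h1 with he | hl
        · exfalso
          have : t ∈ R := by
            rw [hR, Finset.mem_filter, Finset.mem_range]
            exact ⟨htj, he⟩
          have := ((hmemR t).mp this).2
          omega
        · exact hl
      have hwn : ((v:ℝ) + t) ≤ (n:ℝ) := by
        have h1 : ((t:ℕ):ℝ) ≤ (j:ℝ) := by exact_mod_cast le_of_lt htj
        linarith
      have hwv : (v:ℝ) ≤ (v:ℝ) + t := by
        have : (0:ℝ) ≤ (t:ℝ) := Nat.cast_nonneg _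
        linarith
      have hw := hpiece t htj ((v:ℝ) + t) le_rfl (by linarith)
      have hB2 : h x - ((v:ℝ)+t) * x ≤ h (q t) - ((v:ℝ)+t) * q t := by
        rw [← hw]
        exact hG_ge _ hwv hwn x
      have hA := hG_ge z hzv hzn (q t)
      have hprod : 0 < (z - ((v:ℝ)+t)) * (x - q t) :=
        mul_pos (by linarith) (by linarith)
      linarith [hA, hB2, hprod]
  -- ### the equivalence
  constructor
  · rintro ⟨hm, hm0⟩
    refine ⟨hm0, ?_⟩
    have hRcard : R.card = m := by rw [← hcardR, hm]
    have hRne : R.Nonempty := Finset.card_pos.mp (by omega)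
    obtain ⟨t₀, ht₀j, htm, haff, hstr⟩ := hmain hRne
    rw [hRcard] at htm haff hstr
    refine ⟨(v:ℝ) + t₀, by linarith [Nat.cast_nonneg (α := ℝ) t₀], ?_, ?_, ?_⟩
    · have h1 : ((v + t₀ + m : ℕ):ℝ) ≤ ((n:ℕ):ℝ) := by exact_mod_cast (by omega : v + t₀ + m ≤ n)
      push_cast at h1
      linarith
    · intro z hzI
      have hzn : z ≤ (n:ℝ) := by
        have h1 : ((v + t₀ + m : ℕ):ℝ) ≤ ((n:ℕ):ℝ) := by exact_mod_cast (by omega : v + t₀ + m ≤ n)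
        push_cast at h1
        have := hzI.2
        linarith
      have hzv : (v:ℝ) ≤ z := by
        have h0 : (0:ℝ) ≤ (t₀:ℝ) := Nat.cast_nonneg _
        have := hzI.1
        linarith
      rw [hvex z hzv hzn, hvex ((v:ℝ) + t₀) (by linarith [Nat.cast_nonneg (α := ℝ) t₀]) (by linarith [hzI.1, hzI.2])]
      rw [haff z hzI.1 hzI.2, haff ((v:ℝ) + t₀) le_rfl (by linarith [Nat.cast_nonneg (α := ℝ) m])]
      ring
    · intro z hzI hcase
      have hx₀v : (v:ℝ) ≤ (v:ℝ) + t₀ := by linarith [Nat.cast_nonneg (α := ℝ) t₀]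
      have hx₀n : (v:ℝ) + t₀ ≤ (n:ℝ) := by
        have h1 : ((v + t₀ + m : ℕ):ℝ) ≤ ((n:ℕ):ℝ) := by exact_mod_cast (by omega : v + t₀ + m ≤ n)
        push_cast at h1
        have h2 : (0:ℝ) ≤ (m:ℝ) := Nat.cast_nonneg _
        linarith
      rw [hvex z hzI.1 hzI.2, hvex ((v:ℝ) + t₀) hx₀v hx₀n]
      rw [haff ((v:ℝ) + t₀) le_rfl (by linarith [Nat.cast_nonneg (α := ℝ) m])]
      have := hstr z hzI.1 hzI.2 hcase
      linarith
  · rintro ⟨hm0, x₀, hx₁, hx₂, haffH, hstrH⟩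
    have hm1 : (1:ℝ) ≤ (m:ℝ) := by exact_mod_cast hm0
    have hx₀n : x₀ ≤ (n:ℝ) := by linarith
    have haffG : ∀ z ∈ Set.Icc x₀ (x₀ + (m:ℝ)), G z = G x₀ - x * (z - x₀) := by
      intro z hzI
      rw [← hvex z (by linarith [hzI.1]) (by linarith [hzI.2]), ← hvex x₀ hx₁ hx₀n]
      exact haffH z hzI
    have hstrG : ∀ z ∈ Set.Icc (v:ℝ) (n:ℝ), (z < x₀ ∨ x₀ + (m:ℝ) < z) →
        G x₀ - x * (z - x₀) < G z := by
      intro z hzI hcase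
      rw [← hvex z hzI.1 hzI.2, ← hvex x₀ hx₁ hx₀n]
      exact hstrH z hzI hcase
    have hRne : R.Nonempty := by
      set t : ℕ := ⌊x₀ - (v:ℝ)⌋₊ with htdef
      have h0 : (0:ℝ) ≤ x₀ - v := by linarith
      have hfl : (t:ℝ) ≤ x₀ - v := Nat.floor_le h0
      have hfu : x₀ - v < (t:ℝ) + 1 := Nat.lt_floor_add_one _
      have htj : t < j := by
        have h1 : (t:ℝ) < (j:ℝ) := by linarith
        exact_mod_cast h1
      set u : ℝ := min (x₀ + 1) ((v:ℝ) + t + 1) with hu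
      have hu1 : x₀ < u := lt_min (by linarith) (by linarith)
      have hu2 : u ≤ (v:ℝ) + t + 1 := min_le_right _ _
      have hu3 : (v:ℝ) + t ≤ u := le_min (by linarith) (by linarith)
      have hup1 : G u = h (q t) - u * q t := hpiece t htj u hu3 hu2
      have hup0 : G x₀ = h (q t) - x₀ * q t := hpiece t htj x₀ (by linarith) (by linarith)
      have huI : u ∈ Set.Icc x₀ (x₀ + (m:ℝ)) :=
        ⟨le_of_lt hu1, le_trans (min_le_left _ _) (by linarith)⟩
      have heq := haffG u huI
      rw [hup1, hup0] at heq
      have h2 : (u - x₀) * (q t - x) = 0 := by linear_combination -heq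
      have hqx : q t = x := by
        rcases mul_eq_zero.mp h2 with h3 | h3
        · exfalso; have : u ≠ x₀ := ne_of_gt hu1; exact this (by linarith)
        · linarith
      exact ⟨t, by rw [hR, Finset.mem_filter, Finset.mem_range]; exact ⟨htj, hqx⟩⟩
    obtain ⟨t₀, ht₀j, htm, haffM, hstrM⟩ := hmain hRne
    set mR : ℕ := R.card with hmR
    set x₀' : ℝ := (v:ℝ) + t₀ with hx₀'
    have hmR1 : (1:ℝ) ≤ (mR:ℝ) := by exact_mod_cast Finset.card_pos.mpr hRne
    have hx₀'v : (v:ℝ) ≤ x₀' := by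
      rw [hx₀']
      linarith [Nat.cast_nonneg (α := ℝ) t₀]
    have hx₀'m : x₀' + (mR:ℝ) ≤ (n:ℝ) := by
      have h1 : ((t₀ + mR : ℕ):ℝ) ≤ ((j:ℕ):ℝ) := Nat.cast_le.mpr htm
      push_cast at h1
      rw [hx₀']
      linarith
    have hx₀'n : x₀' ≤ (n:ℝ) := by linarith
    -- the intervals must intersect
    have hov1 : x₀' ≤ x₀ + (m:ℝ) := by
      by_contra hcon
      push_neg at hcon
      have hS2 : h x - x₀ * x < G x₀ := hstrM x₀ hx₁ hx₀n (Or.inl (by linarith))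
      have hS1 : G x₀ - x * (x₀' - x₀) < G x₀' :=
        hstrG x₀' ⟨hx₀'v, hx₀'n⟩ (Or.inr hcon)
      have hS3 : G x₀' = h x - x₀' * x := haffM x₀' le_rfl (by linarith)
      linarith [hS1, hS2, hS3]
    have hov2 : x₀ ≤ x₀' + (mR:ℝ) := by
      by_contra hcon
      push_neg at hcon
      have hS2 : h x - x₀ * x < G x₀ := hstrM x₀ hx₁ hx₀n (Or.inr (by linarith))
      have hS1 : G x₀ - x * (x₀' - x₀) < G x₀' :=
        hstrG x₀' ⟨hx₀'v, hx₀'n⟩ (Or.inl (by linarith))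
      have hS3 : G x₀' = h x - x₀' * x := haffM x₀' le_rfl (by linarith)
      linarith [hS1, hS2, hS3]
    set p : ℝ := max x₀ x₀' with hp
    have hpI : p ∈ Set.Icc x₀ (x₀ + (m:ℝ)) := ⟨le_max_left _ _, max_le (by linarith) hov1⟩
    have hpM1 : x₀' ≤ p := le_max_right _ _
    have hpM2 : p ≤ x₀' + (mR:ℝ) := max_le hov2 (by linarith)
    have hGp1 : G p = G x₀ - x * (p - x₀) := haffG p hpI
    have hGp2 : G p = h x - p * x := haffM p hpM1 hpM2
    have hline : G x₀ = h x - x * x₀ := by linarith [hGp1, hGp2]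
    -- x₀ = x₀'
    have he1 : x₀' ≤ x₀ := by
      by_contra hcon
      push_neg at hcon
      have hS2 : h x - x₀ * x < G x₀ := hstrM x₀ hx₁ hx₀n (Or.inl hcon)
      linarith [hS2, hline]
    have he2 : x₀ ≤ x₀' := by
      by_contra hcon
      push_neg at hcon
      have hS1 : G x₀ - x * (x₀' - x₀) < G x₀' :=
        hstrG x₀' ⟨hx₀'v, hx₀'n⟩ (Or.inl hcon)
      have hS3 : G x₀' = h x - x₀' * x := haffM x₀' le_rfl (by linarith)
      linarith [hS1, hS3, hline]
    have hxx : x₀ = x₀' := le_antisymm he2 he1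
    -- endpoints
    have he3 : x₀ + (m:ℝ) ≤ x₀' + (mR:ℝ) := by
      by_contra hcon
      push_neg at hcon
      have hzI : x₀ + (m:ℝ) ∈ Set.Icc (v:ℝ) (n:ℝ) := ⟨by linarith, by linarith⟩
      have hS2 : h x - (x₀ + (m:ℝ)) * x < G (x₀ + (m:ℝ)) :=
        hstrM (x₀ + (m:ℝ)) hzI.1 hzI.2 (Or.inr (by linarith))
      have hS1 : G (x₀ + (m:ℝ)) = G x₀ - x * ((x₀ + (m:ℝ)) - x₀) :=
        haffG _ ⟨by linarith, le_rfl⟩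
      linarith [hS1, hS2, hline]
    have he4 : x₀' + (mR:ℝ) ≤ x₀ + (m:ℝ) := by
      by_contra hcon
      push_neg at hcon
      have hzI : x₀' + (mR:ℝ) ∈ Set.Icc (v:ℝ) (n:ℝ) := ⟨by linarith, hx₀'m⟩
      have hS1 : G x₀ - x * ((x₀' + (mR:ℝ)) - x₀) < G (x₀' + (mR:ℝ)) :=
        hstrG _ hzI (Or.inr hcon)
      have hS3 : G (x₀' + (mR:ℝ)) = h x - (x₀' + (mR:ℝ)) * x :=
        haffM _ (by linarith) le_rfl
      linarith [hS1, hS3, hline, hxx]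
    have hmm : (m:ℝ) = (mR:ℝ) := by
      rw [hxx] at he3 he4
      linarith
    have : m = mR := by exact_mod_cast hmm
    exact ⟨by rw [hcardR, ← this], hm0⟩
end

section
/- A formal min-plus polynomial P of degree n satisfies \(P=\overline{P}\) (i.e., its coefficient sequence is convex) if and only if there exist \(c_1\le\cdots\le c_n\in\mathbb{R}\cup\{+\infty\}\) such that \(P=P_n\otimes(Y\oplus c_1)\cdots(Y\oplus c_n)\) as formal polynomials; in that case the \(c_i\) are unique and given by \(c_i=P_{n-i}-P_{n-i+1}\) when \(P_{n-i+1}\ne+\infty\), and \(c_i=+\infty\) otherwise. -/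
open scoped Classical

/-- Cauchy (min-plus) product of formal min-plus polynomials:
`(P ⊗ Q)_k = min_{i + j = k} (P_i + Q_j)`. -/
noncomputable def mpMulPoly (P Q : ℕ → WithTop ℝ) : ℕ → WithTop ℝ :=
  fun k => (Finset.range (k + 1)).inf fun i => P i + Q (k - i)

/-- The min-plus constant polynomial `𝟙`. -/
noncomputable def mpOne : ℕ → WithTop ℝ := fun k => if k = 0 then 0 else ⊤

/-- The linear min-plus factor `Y ⊕ c`. -/
noncomputable def linFactor (c : WithTop ℝ) : ℕ → WithTop ℝ :=
  fun k => if k = 0 then c else if k = 1 then 0 else ⊤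

/-- The min-plus product `(Y ⊕ c₁) ⋯ (Y ⊕ cₙ)`. -/
noncomputable def prodLinFactors : List (WithTop ℝ) → (ℕ → WithTop ℝ)
  | [] => mpOne
  | a :: l => mpMulPoly (linFactor a) (prodLinFactors l)

private lemma wt_nsmul_coe (k : ℕ) (r : ℝ) :
    k • (r : WithTop ℝ) = ((k • r : ℝ) : WithTop ℝ) := by
  induction k with
  | zero => simp
  | succ m ih => rw [succ_nsmul, succ_nsmul, ih, WithTop.coe_add]

private lemma wt_nsmul_top {k : ℕ} (hk : k ≠ 0) : k • (⊤ : WithTop ℝ) = ⊤ := by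
  cases k with
  | zero => exact absurd rfl hk
  | succ m => rw [succ_nsmul]; simp

private lemma wt_nsmul_eq_top {k : ℕ} {x : WithTop ℝ} (hk : k ≠ 0) (h : k • x = ⊤) :
    x = ⊤ := by
  by_contra hne
  obtain ⟨r, hr⟩ := WithTop.ne_top_iff_exists.1 hne
  rw [← hr, wt_nsmul_coe] at h
  exact WithTop.coe_ne_top h

private lemma mpMul_lin (a : WithTop ℝ) (Q : ℕ → WithTop ℝ) (k : ℕ) :
    mpMulPoly (linFactor a) Q k = min (a + Q k) (if k = 0 then ⊤ else Q (k - 1)) := by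
  unfold mpMulPoly
  apply le_antisymm
  · apply le_min
    · have h0 : (0:ℕ) ∈ Finset.range (k+1) := by simp
      have := Finset.inf_le (f := fun i => linFactor a i + Q (k - i)) h0
      simpa [linFactor] using this
    · rcases Nat.eq_zero_or_pos k with hk | hk
      · simp [hk]
      · have h1 : (1:ℕ) ∈ Finset.range (k+1) := by simp; omega
        have := Finset.inf_le (f := fun i => linFactor a i + Q (k - i)) h1
        rw [if_neg (by omega)]
        simpa [linFactor, (by omega : k ≠ 0)] using this
  · apply Finset.le_inf
    intro i hi
    simp only [Finset.mem_range] at hi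
    match i, hi with
    | 0, _ => simpa [linFactor] using min_le_left (a + Q k) _
    | 1, h =>
      have hk : k ≠ 0 := by omega
      calc min (a + Q k) (if k = 0 then ⊤ else Q (k-1)) ≤ _ := min_le_right _ _
        _ ≤ linFactor a 1 + Q (k - 1) := by simp [linFactor, hk]
    | (m+2), _ => simp [linFactor]
private lemma prod_sorted :
    ∀ (l : List (WithTop ℝ)), l.Pairwise (· ≤ ·) → ∀ k,
      prodLinFactors l k = if k ≤ l.length then (l.take (l.length - k)).sum else ⊤
  | [], _, k => by
      cases k <;> simp [prodLinFactors, mpOne]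
  | a :: l, hs, k => by
      rw [List.pairwise_cons] at hs
      obtain ⟨ha, hl⟩ := hs
      have ih := prod_sorted l hl
      show mpMulPoly (linFactor a) (prodLinFactors l) k = _
      rw [mpMul_lin]
      simp only [List.length_cons]
      rcases k with _ | j
      all_goals simp only [Nat.add_sub_cancel]
      · rw [ih 0, if_pos (Nat.zero_le _), if_pos (Nat.zero_le _)]
        simp
      · rcases lt_trichotomy (j+1) (l.length + 1) with hk | hk | hk
        · have hj : j + 1 ≤ l.length := by omega
          rw [ih (j+1), ih j, if_pos (show j + 1 ≤ l.length from hj),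
            if_pos (show j ≤ l.length from by omega),
            if_neg (show ¬(j + 1 = 0) from by omega),
            if_pos (show j + 1 ≤ l.length + 1 from by omega)]
          have hidx : l.length - j - 1 < l.length := by omega
          have hsum : (l.take (l.length - j)).sum
              = (l.take (l.length - j - 1)).sum + l[l.length - j - 1] := by
            have := List.sum_take_succ l (l.length - j - 1) hidx
            rw [show l.length - j - 1 + 1 = l.length - j from by omega] at this
            exact this
          have hle : a + (l.take (l.length - (j+1))).sum ≤ (l.take (l.length - j)).sum := by
            rw [hsum, show l.length - (j+1) = l.length - j - 1 from by omega]
            rw [add_comm ((l.take (l.length - j - 1)).sum)]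
            exact add_le_add_left (ha _ (l.getElem_mem hidx)) _
          rw [min_eq_left hle]
          rw [show l.length + 1 - (j+1) = (l.length - (j+1)) + 1 from by omega]
          rw [List.take_succ_cons, List.sum_cons]
        · have hj : j = l.length := by omega
          subst hj
          rw [ih (l.length+1), ih l.length,
            if_neg (show ¬(l.length + 1 ≤ l.length) from by omega),
            if_pos (show l.length ≤ l.length from le_rfl),
            if_neg (show ¬(l.length + 1 = 0) from by omega),
            if_pos (show l.length + 1 ≤ l.length + 1 from le_rfl)]
          simp
        · rw [ih (j+1), ih j,
            if_neg (show ¬(j + 1 ≤ l.length) from by omega),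
            if_neg (show ¬(j ≤ l.length) from by omega),
            if_neg (show ¬(j + 1 = 0) from by omega),
            if_neg (show ¬(j + 1 ≤ l.length + 1) from by omega)]
          simp
private lemma take_ofFn_sum (n : ℕ) (c : Fin n → WithTop ℝ) :
    ∀ j, j ≤ n → ((List.ofFn c).take j).sum
      = ∑ i ∈ Finset.range j, (if h : i < n then c ⟨i, h⟩ else ⊤) := by
  intro j
  induction j with
  | zero => simp
  | succ m ih =>
    intro h
    have hm : m < (List.ofFn c).length := by simp; omega
    rw [List.sum_take_succ _ m hm, ih (by omega), Finset.sum_range_succ]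
    congr 1
    rw [List.getElem_ofFn, dif_pos (by omega : m < n)]

private lemma sum_range_eq_top {f : ℕ → WithTop ℝ} :
    ∀ {d}, (∑ i ∈ Finset.range d, f i) = ⊤ → ∃ j, j < d ∧ f j = ⊤ := by
  intro d
  induction d with
  | zero => simp
  | succ m ih =>
    rw [Finset.sum_range_succ]
    intro h
    rcases WithTop.add_eq_top.1 h with h | h
    · obtain ⟨j, hj, hjt⟩ := ih h
      exact ⟨j, by omega, hjt⟩
    · exact ⟨m, by omega, h⟩

private lemma S_convex (cc : ℕ → WithTop ℝ) (hcc : Monotone cc) {a b d : ℕ}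
    (hab : a ≤ b) (hbd : b ≤ d) :
    (d - a) • (∑ i ∈ Finset.range b, cc i) ≤
      (b - a) • (∑ i ∈ Finset.range d, cc i) + (d - b) • (∑ i ∈ Finset.range a, cc i) := by
  have hSb : (∑ i ∈ Finset.range b, cc i)
      = (∑ i ∈ Finset.range a, cc i) + ∑ i ∈ Finset.Ico a b, cc i := by
    rw [Finset.range_eq_Ico, Finset.range_eq_Ico]
    exact (Finset.sum_Ico_consecutive cc (Nat.zero_le a) hab).symm
  have hSd : (∑ i ∈ Finset.range d, cc i)
      = ((∑ i ∈ Finset.range a, cc i) + ∑ i ∈ Finset.Ico a b, cc i)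
        + ∑ i ∈ Finset.Ico b d, cc i := by
    rw [← hSb, Finset.range_eq_Ico, Finset.range_eq_Ico]
    exact (Finset.sum_Ico_consecutive cc (Nat.zero_le b) hbd).symm
  set Sa := ∑ i ∈ Finset.range a, cc i
  set U := ∑ i ∈ Finset.Ico a b, cc i
  set T := ∑ i ∈ Finset.Ico b d, cc i
  have hU_le : U ≤ (b - a) • cc b := by
    have := Finset.sum_le_card_nsmul (Finset.Ico a b) cc (cc b)
      (fun i hi => hcc (le_of_lt (Finset.mem_Ico.1 hi).2))
    simpa [Nat.card_Ico] using this
  have hT_ge : (d - b) • cc b ≤ T := by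
    have := Finset.card_nsmul_le_sum (Finset.Ico b d) cc (cc b)
      (fun i hi => hcc (Finset.mem_Ico.1 hi).1)
    simpa [Nat.card_Ico] using this
  have key : (d - b) • U ≤ (b - a) • T := by
    calc (d - b) • U ≤ (d - b) • ((b - a) • cc b) := nsmul_le_nsmul_right hU_le _
      _ = (b - a) • ((d - b) • cc b) := by
          rw [← mul_nsmul', ← mul_nsmul', Nat.mul_comm]
      _ ≤ (b - a) • T := nsmul_le_nsmul_right hT_ge _
  rw [hSb, hSd, show d - a = (b - a) + (d - b) from by omega]
  calc ((b - a) + (d - b)) • (Sa + U)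
      = ((b - a) • Sa + (b - a) • U + (d - b) • Sa) + (d - b) • U := by
        rw [add_nsmul, nsmul_add, nsmul_add]; abel
    _ ≤ ((b - a) • Sa + (b - a) • U + (d - b) • Sa) + (b - a) • T :=
        add_le_add_right key _
    _ = (b - a) • (Sa + U + T) + (d - b) • Sa := by
        rw [nsmul_add, nsmul_add]; abel
private noncomputable def cOf (n : ℕ) (P : ℕ → WithTop ℝ) : Fin n → WithTop ℝ :=
  fun i => if h : P (n - i.val) = ⊤ then ⊤
    else P (n - i.val - 1) + ↑(-(P (n - i.val)).untop h)

private lemma cOf_top {n : ℕ} {P : ℕ → WithTop ℝ} {i : Fin n}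
    (h : P (n - i.val) = ⊤) : cOf n P i = ⊤ := dif_pos h

private lemma cOf_ne_top {n : ℕ} {P : ℕ → WithTop ℝ} {i : Fin n}
    (h : ¬ P (n - i.val) = ⊤) :
    cOf n P i = P (n - i.val - 1) + ↑(-(P (n - i.val)).untop h) := dif_neg h

private lemma factor_eval (n : ℕ) (c : Fin n → WithTop ℝ) (hc : Monotone c) (k : ℕ) :
    prodLinFactors (List.ofFn c) k
      = if k ≤ n then
          ∑ i ∈ Finset.range (n - k), (if h : i < n then c ⟨i, h⟩ else ⊤)
        else ⊤ := by
  rw [prod_sorted _ (List.sortedLE_iff_pairwise.1 (List.sortedLE_ofFn_iff.2 hc)) k, List.length_ofFn]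
  by_cases hk : k ≤ n
  · rw [if_pos hk, if_pos hk, take_ofFn_sum n c (n - k) (by omega)]
  · rw [if_neg hk, if_neg hk]

/-- A formal min-plus polynomial `P` of degree `n` has a convex coefficient
sequence iff it factors as `P = P_n ⊗ (Y ⊕ c₁) ⋯ (Y ⊕ cₙ)` with
`c₁ ≤ ⋯ ≤ cₙ`; in that case the `cᵢ` are unique and given by
`cᵢ = P_{n-i} - P_{n-i+1}` when `P_{n-i+1} ≠ +∞` and `cᵢ = +∞` otherwise. -/
theorem stmt_3 (n : ℕ) (P : ℕ → WithTop ℝ) (hdeg : P n ≠ ⊤)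
    (hhigh : ∀ k, n < k → P k = ⊤) :
    ((∀ i j k : ℕ, i ≤ j → j ≤ k → k ≤ n →
        (k - i) • P j ≤ (k - j) • P i + (j - i) • P k) ↔
      ∃ c : Fin n → WithTop ℝ, Monotone c ∧
        ∀ k, P k = P n + prodLinFactors (List.ofFn c) k) ∧
    (∀ c : Fin n → WithTop ℝ, Monotone c →
      (∀ k, P k = P n + prodLinFactors (List.ofFn c) k) →
      ∀ i : Fin n,
        (P (n - i.val) ≠ ⊤ → c i + P (n - i.val) = P (n - i.val - 1)) ∧
        (P (n - i.val) = ⊤ → c i = ⊤)) := by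
  have hPk : ∀ (c : Fin n → WithTop ℝ), Monotone c →
      (∀ k, P k = P n + prodLinFactors (List.ofFn c) k) →
      ∀ m, m ≤ n → P m = P n + ∑ i ∈ Finset.range (n - m),
        (if h : i < n then c ⟨i, h⟩ else ⊤) := by
    intro c hmono hfac m hm
    rw [hfac m, factor_eval n c hmono m, if_pos hm]
  constructor
  · constructor
    · -- forward direction
      intro hconv
      have hdown : ∀ m, m + 1 < n → P (m + 1) = ⊤ → P m = ⊤ := by
        intro m hm htop
        have h := hconv m (m + 1) n (by omega) (by omega) le_rfl
        rw [htop, wt_nsmul_top (show n - m ≠ 0 by omega)] at h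
        have h2 := top_le_iff.1 h
        rcases WithTop.add_eq_top.1 h2 with h3 | h3
        · exact wt_nsmul_eq_top (show n - (m + 1) ≠ 0 by omega) h3
        · rw [show m + 1 - m = 1 from by omega, one_smul] at h3
          exact absurd h3 hdeg
      have hcN : Monotone (fun m => if h : m < n then cOf n P ⟨m, h⟩ else (⊤ : WithTop ℝ)) := by
        apply monotone_nat_of_le_succ
        intro m
        by_cases hm : m + 1 < n
        · rw [dif_pos hm, dif_pos (show m < n by omega)]
          by_cases h1 : P (n - (m + 1)) = ⊤
          · rw [cOf_top (i := ⟨m + 1, hm⟩) h1]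
            exact le_top
          · rw [cOf_ne_top (i := ⟨m + 1, hm⟩) h1]
            by_cases h2 : P (n - m) = ⊤
            · exfalso
              rcases Nat.eq_zero_or_pos m with hm0 | hm0
              · subst hm0; rw [Nat.sub_zero] at h2; exact hdeg h2
              · have := hdown (n - m - 1) (by omega)
                  (by rw [show n - m - 1 + 1 = n - m from by omega]; exact h2)
                exact h1 (by rw [show n - (m + 1) = n - m - 1 from by omega]; exact this)
            · rw [cOf_ne_top (i := ⟨m, by omega⟩) h2]
              show P (n - m - 1) + ↑(-(P (n - m)).untop h2) ≤
                P (n - (m + 1) - 1) + ↑(-(P (n - (m + 1))).untop h1)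
              obtain ⟨p2, hp2⟩ := WithTop.ne_top_iff_exists.1 h2
              obtain ⟨p1, hp1⟩ := WithTop.ne_top_iff_exists.1 h1
              have hu2 : (P (n - m)).untop h2 = p2 := by
                have : (↑((P (n - m)).untop h2) : WithTop ℝ) = ↑p2 := by
                  rw [WithTop.coe_untop, ← hp2]
                exact WithTop.coe_inj.1 this
              have hu1 : (P (n - (m + 1))).untop h1 = p1 := by
                have : (↑((P (n - (m + 1))).untop h1) : WithTop ℝ) = ↑p1 := by
                  rw [WithTop.coe_untop, ← hp1]
                exact WithTop.coe_inj.1 this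
              rw [hu2, hu1, show n - m - 1 = n - (m + 1) from by omega, ← hp1]
              by_cases h0 : P (n - (m + 1) - 1) = ⊤
              · rw [h0, top_add]; exact le_top
              · obtain ⟨p0, hp0⟩ := WithTop.ne_top_iff_exists.1 h0
                rw [← hp0, ← WithTop.coe_add, ← WithTop.coe_add, WithTop.coe_le_coe]
                have h := hconv (n - (m + 1) - 1) (n - (m + 1)) (n - m)
                  (by omega) (by omega) (by omega)
                rw [show n - m - (n - (m + 1) - 1) = 2 from by omega,
                  show n - m - (n - (m + 1)) = 1 from by omega,
                  show n - (m + 1) - (n - (m + 1) - 1) = 1 from by omega,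
                  ← hp0, ← hp1, ← hp2, one_smul, one_smul, wt_nsmul_coe,
                  ← WithTop.coe_add, WithTop.coe_le_coe] at h
                rw [nsmul_eq_mul] at h
                push_cast at h
                linarith
        · rw [dif_neg hm]; exact le_top
      have hmono : Monotone (cOf n P) := by
        intro i j hij
        have h := hcN (show i.val ≤ j.val from hij)
        simp only at h
        rwa [dif_pos i.isLt, dif_pos j.isLt, Fin.eta, Fin.eta] at h
      have key : ∀ d, d ≤ n → P (n - d) = P n + ∑ i ∈ Finset.range d,
          (if h : i < n then cOf n P ⟨i, h⟩ else ⊤) := by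
        intro d
        induction d with
        | zero => intro _; simp
        | succ d ih =>
          intro h
          have hd : d < n := by omega
          rw [Finset.sum_range_succ, dif_pos hd, ← add_assoc, ← ih (by omega)]
          by_cases ht : P (n - d) = ⊤
          · rw [cOf_top (i := ⟨d, hd⟩) ht, ht, top_add]
            rcases Nat.eq_zero_or_pos d with h0 | h0
            · subst h0; rw [Nat.sub_zero] at ht; exact absurd ht hdeg
            · have := hdown (n - d - 1) (by omega)
                (by rw [show n - d - 1 + 1 = n - d from by omega]; exact ht)
              rw [show n - (d + 1) = n - d - 1 from by omega]; exact this
          · rw [cOf_ne_top (i := ⟨d, hd⟩) ht]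
            obtain ⟨p, hp⟩ := WithTop.ne_top_iff_exists.1 ht
            have hu : (P (n - d)).untop ht = p := by
              have : (↑((P (n - d)).untop ht) : WithTop ℝ) = ↑p := by
                rw [WithTop.coe_untop, ← hp]
              exact WithTop.coe_inj.1 this
            show P (n - (d + 1)) = P (n - d) + (P (n - d - 1) + ↑(-(P (n - d)).untop ht))
            rw [hu, ← hp, show n - (d + 1) = n - d - 1 from by omega,
              add_comm (P (n - d - 1)) (↑(-p) : WithTop ℝ), ← add_assoc,
              ← WithTop.coe_add]
            norm_num
      refine ⟨cOf n P, hmono, ?_⟩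
      intro k
      rw [factor_eval n (cOf n P) hmono k]
      by_cases hk : k ≤ n
      · rw [if_pos hk]
        have h := key (n - k) (by omega)
        rw [show n - (n - k) = k from by omega] at h
        exact h
      · rw [if_neg hk, add_top]
        exact hhigh k (by omega)
    · -- backward direction
      rintro ⟨c, hmono, hfac⟩ i j k hij hjk hkn
      have hccm : Monotone (fun m => if h : m < n then c ⟨m, h⟩ else (⊤ : WithTop ℝ)) := by
        intro x y hxy
        show (if h : x < n then c ⟨x, h⟩ else (⊤ : WithTop ℝ)) ≤
          (if h : y < n then c ⟨y, h⟩ else (⊤ : WithTop ℝ))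
        by_cases hy : y < n
        · rw [dif_pos hy, dif_pos (show x < n by omega)]
          exact hmono (show (⟨x, by omega⟩ : Fin n) ≤ ⟨y, hy⟩ from hxy)
        · rw [dif_neg hy]; exact le_top
      rw [hPk c hmono hfac i (by omega), hPk c hmono hfac j (by omega),
        hPk c hmono hfac k hkn]
      have hS := S_convex _ hccm (show n - k ≤ n - j from by omega)
        (show n - j ≤ n - i from by omega)
      rw [show n - i - (n - k) = k - i from by omega,
        show n - j - (n - k) = k - j from by omega,
        show n - i - (n - j) = j - i from by omega] at hS
      set Sa := ∑ x ∈ Finset.range (n - k), (if h : x < n then c ⟨x, h⟩ else (⊤ : WithTop ℝ))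
      set Sb := ∑ x ∈ Finset.range (n - j), (if h : x < n then c ⟨x, h⟩ else (⊤ : WithTop ℝ))
      set Sd := ∑ x ∈ Finset.range (n - i), (if h : x < n then c ⟨x, h⟩ else (⊤ : WithTop ℝ))
      calc (k - i) • (P n + Sb) = (k - i) • P n + (k - i) • Sb := nsmul_add _ _ _
        _ ≤ (k - i) • P n + ((k - j) • Sd + (j - i) • Sa) := add_le_add_right hS _
        _ = (k - j) • (P n + Sd) + (j - i) • (P n + Sa) := by
            rw [show k - i = (k - j) + (j - i) from by omega, add_nsmul,
              nsmul_add, nsmul_add]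
            abel
  · -- uniqueness
    intro c hmono hfac i
    have hd : i.val < n := i.isLt
    have e1 := hPk c hmono hfac (n - i.val) (by omega)
    rw [show n - (n - i.val) = i.val from by omega] at e1
    have e2 := hPk c hmono hfac (n - i.val - 1) (by omega)
    rw [show n - (n - i.val - 1) = i.val + 1 from by omega] at e2
    constructor
    · intro _
      rw [e1, e2, Finset.sum_range_succ, dif_pos hd, Fin.eta]
      abel
    · intro ht
      rw [e1] at ht
      rcases WithTop.add_eq_top.1 ht with h | h
      · exact absurd h hdeg
      · obtain ⟨j, hj, hjt⟩ := sum_range_eq_top h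
        have hjn : j < n := by omega
        rw [dif_pos hjn] at hjt
        have hle := hmono (show (⟨j, hjn⟩ : Fin n) ≤ i from by
          simp only [Fin.le_def]; omega)
        rw [hjt] at hle
        exact top_le_iff.1 hle
end

section
/- Let P be a formal min-plus polynomial of degree n, let \(c\in\mathbb{R}\) be a finite tropical root of P with multiplicity m, and let m' be the sum of multiplicities of all roots of P strictly greater than c (including \(+\infty\)). Then \(\hat P(c)=P_{m'}+m'c=P_{m+m'}+(m+m')c\), and \(\hat P(c)<P_i+ic\) for all i with \(0\le i<m'\) and all i with \(m+m'<i\le n\). -/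
open scoped Classical

lemma tropEval_le (P : ℕ → WithTop ℝ) (n : ℕ) (y : ℝ) (j : ℕ) (hj : j ≤ n) :
    tropEval P n y ≤ P j + (((j : ℝ) * y : ℝ) : WithTop ℝ) :=
  Finset.inf_le (by simp [Finset.mem_range]; omega)

/-- Key cancellation lemma for the strict inequalities. -/
lemma trop_key (n : ℕ) (P : ℕ → WithTop ℝ) (x y : ℝ) (k : ℕ)
    (hk : tropEval P n y = tropEval P n x + (((k : ℝ) * (y - x) : ℝ) : WithTop ℝ))
    (j : ℕ) (hj : j ≤ n) :
    tropEval P n x + ((((k : ℝ) - j) * (y - x) : ℝ) : WithTop ℝ)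
      ≤ P j + (((j : ℝ) * x : ℝ) : WithTop ℝ) := by
  have h1 := tropEval_le P n y j hj
  rw [hk] at h1
  have e1 : ((k : ℝ) * (y - x) : ℝ) = (((k : ℝ) - j) * (y - x)) + ((j : ℝ) * (y - x)) := by ring
  have e2 : ((j : ℝ) * y : ℝ) = ((j : ℝ) * x) + ((j : ℝ) * (y - x)) := by ring
  rw [e1, e2, WithTop.coe_add, WithTop.coe_add, ← add_assoc, ← add_assoc] at h1
  exact (WithTop.add_le_add_iff_right (WithTop.coe_ne_top)).mp h1

/-- If `tropEval` is affine with slope `k` on a one-sided punctured interval at `x`,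
then `P k = F - k x` where `F` is the value at `x`. -/
lemma trop_attain (n : ℕ) (P : ℕ → WithTop ℝ) (x y F : ℝ) (k : ℕ) (hxy : y ≠ x)
    (haff : ∀ z : ℝ, min x y ≤ z → z ≤ max x y → z ≠ x →
      tropEval P n z = ((F + (k : ℝ) * (z - x) : ℝ) : WithTop ℝ)) :
    P k = ((F - (k : ℝ) * x : ℝ) : WithTop ℝ) := by
  set z : Fin (n + 2) → ℝ := fun j => x + (y - x) / ((j : ℝ) + 1) with hz
  have hz_prop : ∀ j : Fin (n + 2), min x y ≤ z j ∧ z j ≤ max x y ∧ z j ≠ x := by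
    intro j
    have hd0 : (0 : ℝ) < (j : ℝ) + 1 := by positivity
    have hd1 : (1 : ℝ) ≤ (j : ℝ) + 1 := by
      have : (0 : ℝ) ≤ (j : ℝ) := Nat.cast_nonneg _
      linarith
    rcases lt_or_gt_of_ne hxy with h | h
    · -- y < x
      have hle : y - x ≤ (y - x) / ((j : ℝ) + 1) := by
        rw [le_div_iff₀ hd0]; nlinarith
      have hlt : (y - x) / ((j : ℝ) + 1) < 0 := div_neg_of_neg_of_pos (by linarith) hd0
      refine ⟨?_, ?_, ?_⟩
      · rw [min_eq_right h.le, hz]; dsimp only; linarith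
      · rw [max_eq_left h.le, hz]; dsimp only; linarith
      · rw [hz]; dsimp only; intro hcon; linarith
    · -- x < y
      have hle : (y - x) / ((j : ℝ) + 1) ≤ y - x := by
        rw [div_le_iff₀ hd0]; nlinarith
      have hlt : 0 < (y - x) / ((j : ℝ) + 1) := div_pos (by linarith) hd0
      refine ⟨?_, ?_, ?_⟩
      · rw [min_eq_left h.le, hz]; dsimp only; linarith
      · rw [max_eq_right h.le, hz]; dsimp only; linarith
      · rw [hz]; dsimp only; intro hcon; linarith
  -- for each j, the inf is attained at some index g j
  have hatt : ∀ j : Fin (n + 2), ∃ g ∈ Finset.range (n + 1),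
      tropEval P n (z j) = P g + (((g : ℝ) * (z j) : ℝ) : WithTop ℝ) := by
    intro j
    obtain ⟨g, hg, hge⟩ := Finset.exists_mem_eq_inf (Finset.range (n + 1))
      ⟨0, by simp⟩ (fun k => P k + (((k : ℝ) * (z j) : ℝ) : WithTop ℝ))
    exact ⟨g, hg, hge⟩
  choose g hg hge using hatt
  -- pigeonhole
  obtain ⟨j1, -, j2, -, hj12, hgj⟩ :=
    Finset.exists_ne_map_eq_of_card_lt_of_maps_to
      (s := (Finset.univ : Finset (Fin (n + 2)))) (t := Finset.range (n + 1))
      (by simp) (fun j _ => hg j)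
  -- the two points are distinct
  have hz12 : z j1 ≠ z j2 := by
    intro hcon
    apply hj12
    rw [hz] at hcon
    dsimp only at hcon
    have hyx : y - x ≠ 0 := sub_ne_zero.mpr hxy
    have hd1 : ((j1 : ℝ) + 1) ≠ 0 := by positivity
    have hd2 : ((j2 : ℝ) + 1) ≠ 0 := by positivity
    have h1 : (y - x) / ((j1 : ℝ) + 1) = (y - x) / ((j2 : ℝ) + 1) := by linarith
    rw [div_eq_div_iff hd1 hd2] at h1
    have h2 := mul_left_cancel₀ hyx h1
    have h3 : ((j1 : ℕ) : ℝ) = ((j2 : ℕ) : ℝ) := by linarith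
    exact Fin.ext (by exact_mod_cast h3)
  -- extract real equations
  have hfin : ∀ j : Fin (n + 2), ∃ p : ℝ, P (g j) = (p : WithTop ℝ) ∧
      p + (g j : ℝ) * (z j) = F + (k : ℝ) * (z j - x) := by
    intro j
    obtain ⟨h1, h2, h3⟩ := hz_prop j
    have heq : P (g j) + (((g j : ℝ) * (z j) : ℝ) : WithTop ℝ)
        = ((F + (k : ℝ) * (z j - x) : ℝ) : WithTop ℝ) := by
      rw [← hge j, haff (z j) h1 h2 h3]
    have hne : P (g j) ≠ ⊤ := by
      intro hcon
      rw [hcon, top_add] at heq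
      exact WithTop.coe_ne_top heq.symm
    obtain ⟨p, hp⟩ := WithTop.ne_top_iff_exists.mp hne
    refine ⟨p, hp.symm, ?_⟩
    rw [← hp, ← WithTop.coe_add] at heq
    exact_mod_cast heq
  obtain ⟨p1, hp1, he1⟩ := hfin j1
  obtain ⟨p2, hp2, he2⟩ := hfin j2
  have hpp : p1 = p2 := by
    have : (p1 : WithTop ℝ) = p2 := by rw [← hp1, ← hp2, hgj]
    exact_mod_cast this
  rw [hgj] at he1
  have hGk : ((g j2 : ℝ)) = k := by
    have hmul : ((g j2 : ℝ) - k) * (z j1 - z j2) = 0 := by linear_combination he1 - he2 - hpp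
    have hzz : z j1 - z j2 ≠ 0 := sub_ne_zero.mpr hz12
    rcases mul_eq_zero.mp hmul with h | h
    · linarith
    · exact absurd h hzz
  have hgk : g j2 = k := by exact_mod_cast hGk
  rw [← hgk, hp2]
  congr 1
  rw [hGk]
  rw [hGk] at he2
  linear_combination he2

/-- If `x` is a finite tropical root of `P` of multiplicity `m`, and `m'` is the
sum of the multiplicities of the roots of `P` strictly greater than `x`
(`+∞` included), then `P̂(x) = P_{m'} + m' x = P_{m+m'} + (m+m') x`, and
`P̂(x) < P_i + i x` for `0 ≤ i < m'` and for `m + m' < i ≤ n`. -/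
theorem stmt_5 (n : ℕ) (P : ℕ → WithTop ℝ) (hdeg : P n ≠ ⊤)
    (c : Fin n → WithTop ℝ) (hc : Monotone c)
    (hfact : ∀ y : ℝ, tropEval P n y = P n + ∑ i : Fin n, min (y : WithTop ℝ) (c i))
    (x : ℝ) (m m' : ℕ)
    (hm : m = (Finset.univ.filter fun i : Fin n => c i = (x : WithTop ℝ)).card)
    (hm1 : 0 < m)
    (hm' : m' = (Finset.univ.filter fun i : Fin n => (x : WithTop ℝ) < c i).card) :
    tropEval P n x = P m' + (((m' : ℝ) * x : ℝ) : WithTop ℝ) ∧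
    tropEval P n x = P (m + m') + ((((m + m' : ℕ) : ℝ) * x : ℝ) : WithTop ℝ) ∧
    (∀ i, i < m' → tropEval P n x < P i + (((i : ℝ) * x : ℝ) : WithTop ℝ)) ∧
    (∀ i, m + m' < i → i ≤ n → tropEval P n x < P i + (((i : ℝ) * x : ℝ) : WithTop ℝ)) := by
  -- cardinality facts
  have hcard_le : m + m' ≤ n := by
    rw [hm, hm']
    rw [← Finset.card_union_of_disjoint (by
      simp only [Finset.disjoint_filter]
      intro i _ h1 h2
      exact absurd h1 h2.ne')]
    have hcu := Finset.card_le_univ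
      ((Finset.univ.filter fun i : Fin n => c i = (x : WithTop ℝ)) ∪
        (Finset.univ.filter fun i : Fin n => (x : WithTop ℝ) < c i))
    simpa using hcu
  have hm'le : m' ≤ n := le_trans (Nat.le_add_left _ _) hcard_le
  have hge_card : (Finset.univ.filter fun i : Fin n => (x : WithTop ℝ) ≤ c i).card = m + m' := by
    rw [hm, hm']
    rw [← Finset.card_union_of_disjoint (by
      simp only [Finset.disjoint_filter]
      intro i _ h1 h2
      exact absurd h1 h2.ne')]
    congr 1
    ext i
    simp only [Finset.mem_filter, Finset.mem_union, Finset.mem_univ, true_and]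
    constructor
    · intro h
      rcases eq_or_lt_of_le h with h | h
      · exact Or.inl h.symm
      · exact Or.inr h
    · rintro (h | h)
      · exact h.ge
      · exact h.le
  -- the right-side point
  obtain ⟨yR, hxyR, hyR⟩ : ∃ y : ℝ, x < y ∧ ∀ i : Fin n, (x : WithTop ℝ) < c i →
      (y : WithTop ℝ) ≤ c i := by
    set t : WithTop ℝ := Finset.univ.inf (fun i : Fin n =>
      if (x : WithTop ℝ) < c i then c i else ⊤) with ht
    have hxt : (x : WithTop ℝ) < t := by
      rw [ht, Finset.lt_inf_iff (WithTop.coe_lt_top x)]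
      intro i _
      by_cases h : (x : WithTop ℝ) < c i
      · simpa [h] using h
      · simp [h, WithTop.coe_lt_top]
    obtain ⟨z, hz1, hz2⟩ := exists_between hxt
    lift z to ℝ using (hz2.trans_le le_top).ne
    refine ⟨z, by exact_mod_cast hz1, fun i hi => ?_⟩
    refine le_trans hz2.le (le_trans (Finset.inf_le (Finset.mem_univ i)) ?_)
    simp [hi]
  -- the left-side point
  obtain ⟨yL, hxyL, hyL⟩ : ∃ y : ℝ, y < x ∧ ∀ i : Fin n, c i < (x : WithTop ℝ) →
      c i ≤ (y : WithTop ℝ) := by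
    set R : Finset ℝ := (Finset.univ.filter fun i : Fin n => c i < (x : WithTop ℝ)).image
      (fun i => (c i).untopD 0) with hR
    refine ⟨(insert (x - 1) R).max' ⟨x - 1, Finset.mem_insert_self _ _⟩, ?_, ?_⟩
    · refine (Finset.max'_lt_iff _ _).mpr ?_
      intro r hr
      rcases Finset.mem_insert.mp hr with h | h
      · simp [h]
      · obtain ⟨i, hi, hie⟩ := Finset.mem_image.mp h
        have hilt : c i < (x : WithTop ℝ) := (Finset.mem_filter.mp hi).2
        obtain ⟨s, hs⟩ := WithTop.ne_top_iff_exists.mp (hilt.trans_le le_top).ne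
        rw [← hie, ← hs]
        have : (s : WithTop ℝ) < (x : WithTop ℝ) := hs ▸ hilt
        simpa using (by exact_mod_cast this : s < x)
    · intro i hi
      obtain ⟨s, hs⟩ := WithTop.ne_top_iff_exists.mp (hi.trans_le le_top).ne
      have hmem : s ∈ insert (x - 1) R := by
        refine Finset.mem_insert_of_mem ?_
        rw [hR]
        refine Finset.mem_image.mpr ⟨i, Finset.mem_filter.mpr ⟨Finset.mem_univ i, hi⟩, ?_⟩
        rw [← hs]; rfl
      rw [← hs]
      exact_mod_cast Finset.le_max' _ _ hmem
  -- affine identity on the right interval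
  have hsumR : ∀ z : ℝ, x < z → z ≤ yR →
      tropEval P n z = tropEval P n x + (((m' : ℝ) * (z - x) : ℝ) : WithTop ℝ) := by
    intro w hxw hwy
    rw [hfact, hfact, add_assoc]
    congr 1
    have key : ∀ i : Fin n, min (w : WithTop ℝ) (c i)
        = min (x : WithTop ℝ) (c i) +
          (if (x : WithTop ℝ) < c i then ((w - x : ℝ) : WithTop ℝ) else 0) := by
      intro i
      by_cases h : (x : WithTop ℝ) < c i
      · have hw : (w : WithTop ℝ) ≤ c i :=
          le_trans (by exact_mod_cast hwy) (hyR i h)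
        rw [if_pos h, min_eq_left hw, min_eq_left h.le, ← WithTop.coe_add]
        norm_num
      · push_neg at h
        rw [if_neg (not_lt.mpr h), add_zero, min_eq_right h,
          min_eq_right (h.trans (by exact_mod_cast hxw.le))]
    rw [Finset.sum_congr rfl fun i _ => key i, Finset.sum_add_distrib]
    congr 1
    rw [Finset.sum_ite, Finset.sum_const_zero, add_zero, ← WithTop.coe_sum,
      WithTop.coe_eq_coe, Finset.sum_const, hm', nsmul_eq_mul]
  -- affine identity on the left interval
  have hsumL : ∀ z : ℝ, yL ≤ z → z < x →
      tropEval P n z = tropEval P n x + ((((m + m' : ℕ) : ℝ) * (z - x) : ℝ) : WithTop ℝ) := by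
    intro w hyw hwx
    rw [hfact, hfact, add_assoc]
    congr 1
    have key : ∀ i : Fin n, min (w : WithTop ℝ) (c i)
        = min (x : WithTop ℝ) (c i) +
          (if (x : WithTop ℝ) ≤ c i then ((w - x : ℝ) : WithTop ℝ) else 0) := by
      intro i
      by_cases h : (x : WithTop ℝ) ≤ c i
      · have hw : (w : WithTop ℝ) ≤ c i :=
          le_trans (by exact_mod_cast hwx.le) h
        rw [if_pos h, min_eq_left hw, min_eq_left h, ← WithTop.coe_add]
        norm_num
      · push_neg at h
        rw [if_neg (not_le.mpr h), add_zero, min_eq_right h.le,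
          min_eq_right (le_trans (hyL i h) (by exact_mod_cast hyw))]
    rw [Finset.sum_congr rfl fun i _ => key i, Finset.sum_add_distrib]
    congr 1
    rw [Finset.sum_ite, Finset.sum_const_zero, add_zero, ← WithTop.coe_sum,
      WithTop.coe_eq_coe, Finset.sum_const, hge_card, nsmul_eq_mul]
  -- finiteness of the value at x
  have hfin : tropEval P n x ≠ ⊤ := by
    intro h
    have hle := tropEval_le P n x n le_rfl
    rw [h, top_le_iff] at hle
    exact (WithTop.add_ne_top.mpr ⟨hdeg, WithTop.coe_ne_top⟩) hle
  obtain ⟨F, hF⟩ := WithTop.ne_top_iff_exists.mp hfin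
  -- exact coefficient values via the attainment lemma
  have hPm' : P m' = ((F - (m' : ℝ) * x : ℝ) : WithTop ℝ) := by
    refine trop_attain n P x yR F m' hxyR.ne' ?_
    intro w h1 h2 h3
    rw [min_eq_left hxyR.le] at h1
    rw [max_eq_right hxyR.le] at h2
    have hxw : x < w := lt_of_le_of_ne h1 (Ne.symm h3)
    rw [hsumR w hxw h2, ← hF, ← WithTop.coe_add]
  have hPmm' : P (m + m') = ((F - ((m + m' : ℕ) : ℝ) * x : ℝ) : WithTop ℝ) := by
    refine trop_attain n P x yL F (m + m') hxyL.ne ?_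
    intro w h1 h2 h3
    rw [min_eq_right hxyL.le] at h1
    rw [max_eq_left hxyL.le] at h2
    have hwx : w < x := lt_of_le_of_ne h2 h3
    rw [hsumL w h1 hwx, ← hF, ← WithTop.coe_add]
  have heq1 : tropEval P n x = P m' + (((m' : ℝ) * x : ℝ) : WithTop ℝ) := by
    rw [hPm', ← hF, ← WithTop.coe_add, WithTop.coe_eq_coe]
    ring
  have heq2 : tropEval P n x = P (m + m') + ((((m + m' : ℕ) : ℝ) * x : ℝ) : WithTop ℝ) := by
    rw [hPmm', ← hF, ← WithTop.coe_add, WithTop.coe_eq_coe]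
    ring
  have keyR := trop_key n P x yR m' (hsumR yR hxyR le_rfl)
  have keyL := trop_key n P x yL (m + m') (hsumL yL le_rfl hxyL)
  refine ⟨heq1, heq2, ?_, ?_⟩
  · intro i hi
    have hle := keyR i (le_trans hi.le hm'le)
    have hpos : (0 : ℝ) < ((m' : ℝ) - i) * (yR - x) := by
      have : (i : ℝ) < m' := by exact_mod_cast hi
      have : (0 : ℝ) < (m' : ℝ) - i := by linarith
      nlinarith
    calc tropEval P n x < tropEval P n x + ((((m' : ℝ) - i) * (yR - x) : ℝ) : WithTop ℝ) := by
          conv_lhs => rw [← add_zero (tropEval P n x)]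
          exact WithTop.add_lt_add_left hfin (by exact_mod_cast hpos)
      _ ≤ _ := hle
  · intro i hi hin
    have hle := keyL i hin
    have hpos : (0 : ℝ) < (((m + m' : ℕ) : ℝ) - i) * (yL - x) := by
      have h1 : ((m + m' : ℕ) : ℝ) < i := by exact_mod_cast hi
      nlinarith
    calc tropEval P n x
        < tropEval P n x + (((((m + m' : ℕ) : ℝ) - i) * (yL - x) : ℝ) : WithTop ℝ) := by
          conv_lhs => rw [← add_zero (tropEval P n x)]
          exact WithTop.add_lt_add_left hfin (by exact_mod_cast hpos)
      _ ≤ _ := hle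
end

section
/- Let P and Q be formal min-plus polynomials of degree n with \(P\ge Q\) coefficientwise and \(P_n=Q_n\ne+\infty\). Then the sequence of tropical roots of P is weakly super-majorized by that of Q: for all \(k=1,\ldots,n\), the sum of the k smallest roots of P is greater than or equal to the sum of the k smallest roots of Q (with the convention that sums involving \(+\infty\) equal \(+\infty\)). -/
open scoped Classical

/-- If every truncated sum `∑ min(y, c i)` is bounded by `B`, then so is `∑ c i`. -/
lemma sum_min_le_of_forall {ι : Type*} (s : Finset ι) (c : ι → WithTop ℝ) (B : WithTop ℝ)
    (h : ∀ y : ℝ, ∑ i ∈ s, min (y : WithTop ℝ) (c i) ≤ B) : ∑ i ∈ s, c i ≤ B := by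
  by_cases htop : ∀ i ∈ s, c i ≠ ⊤
  · -- all coefficients finite: take `y` above all of them
    obtain ⟨M, hM⟩ := (s.image fun i => (c i).untopD 0).exists_le
    have hle : ∀ i ∈ s, c i ≤ ((M : ℝ) : WithTop ℝ) := by
      intro i hi
      obtain ⟨r, hr⟩ := WithTop.ne_top_iff_exists.mp (htop i hi)
      have h1 : (c i).untopD 0 ≤ M := hM _ (Finset.mem_image_of_mem _ hi)
      rw [← hr] at h1 ⊢
      simpa using h1
    calc ∑ i ∈ s, c i = ∑ i ∈ s, min ((M : ℝ) : WithTop ℝ) (c i) := by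
          refine Finset.sum_congr rfl fun i hi => ?_
          rw [min_eq_right (hle i hi)]
      _ ≤ B := h M
  · -- some coefficient is `⊤`: then `B = ⊤`
    push_neg at htop
    obtain ⟨i₀, hi₀s, hi₀⟩ := htop
    rcases B with _ | b
    · exact le_top
    · exfalso
      set L : ℝ := ∑ i ∈ s.erase i₀, min 0 ((c i).untopD 0) with hL
      have hlow : ∀ y : ℝ, 0 ≤ y → ((y + L : ℝ) : WithTop ℝ) ≤ ∑ i ∈ s, min (y : WithTop ℝ) (c i) := by
        intro y hy
        rw [← Finset.add_sum_erase s _ hi₀s, hi₀, inf_top_eq, WithTop.coe_add]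
        refine add_le_add le_rfl ?_
        rw [hL, WithTop.coe_sum]
        refine Finset.sum_le_sum fun i hi => ?_
        rcases eq_or_ne (c i) ⊤ with hc | hc
        · rw [hc, WithTop.untopD_top, inf_top_eq, WithTop.coe_le_coe]
          exact min_le_of_left_le hy
        · obtain ⟨r, hr⟩ := WithTop.ne_top_iff_exists.mp hc
          rw [← hr, WithTop.untopD_coe, ← WithTop.coe_min, WithTop.coe_le_coe]
          exact min_le_min hy le_rfl
      have hcon : ∀ y : ℝ, 0 ≤ y → y + L ≤ b := by
        intro y hy
        exact WithTop.coe_le_coe.mp ((hlow y hy).trans (h y))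
      have h1 := hcon (max 0 (b - L + 1)) (le_max_left _ _)
      have h2 : b - L + 1 ≤ max 0 (b - L + 1) := le_max_right _ _
      linarith

/-- Monotonicity of tropical roots: if `P ≥ Q` coefficientwise and
`P_n = Q_n ≠ +∞`, then the (increasingly sorted) roots of `P` are weakly
super-majorized by those of `Q`: every partial sum of the `k` smallest roots of
`P` dominates the corresponding partial sum for `Q`. -/
theorem stmt_6 (n : ℕ) (P Q : ℕ → WithTop ℝ)
    (hlead : P n = Q n) (hne : Q n ≠ ⊤)
    (hPQ : ∀ k, Q k ≤ P k)
    (cP cQ : Fin n → WithTop ℝ) (hcP : Monotone cP) (hcQ : Monotone cQ)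
    (hfactP : ∀ y : ℝ, tropEval P n y = P n + ∑ i : Fin n, min (y : WithTop ℝ) (cP i))
    (hfactQ : ∀ y : ℝ, tropEval Q n y = Q n + ∑ i : Fin n, min (y : WithTop ℝ) (cQ i)) :
    ∀ k : ℕ, k ≤ n →
      ∑ i ∈ Finset.univ.filter (fun i : Fin n => i.val < k), cQ i ≤
      ∑ i ∈ Finset.univ.filter (fun i : Fin n => i.val < k), cP i := by
  -- pointwise comparison of the factored evaluations
  have hstar : ∀ y : ℝ, (∑ i : Fin n, min (y : WithTop ℝ) (cQ i)) ≤
      ∑ i : Fin n, min (y : WithTop ℝ) (cP i) := by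
    intro y
    have h1 : tropEval Q n y ≤ tropEval P n y :=
      Finset.inf_mono_fun fun k _ => add_le_add_left (hPQ k) _
    rw [hfactQ y, hfactP y, hlead] at h1
    exact (WithTop.add_le_add_iff_left hne).mp h1
  intro k hk
  apply sum_min_le_of_forall
  intro y
  rcases eq_or_lt_of_le hk with hkn | hkn
  · -- k = n : the filter is the whole universe
    have hfil : Finset.univ.filter (fun i : Fin n => i.val < k) = Finset.univ :=
      Finset.filter_true_of_mem fun i _ => by have := i.isLt; omega
    rw [hfil]
    exact (hstar y).trans (Finset.sum_le_sum fun i _ => min_le_right _ _)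
  · -- k < n
    set j : Fin n := ⟨k, hkn⟩ with hj
    have key : ∀ z : ℝ, (z : WithTop ℝ) ≤ cQ j →
        ∑ i ∈ Finset.univ.filter (fun i : Fin n => i.val < k), min (z : WithTop ℝ) (cQ i) ≤
        ∑ i ∈ Finset.univ.filter (fun i : Fin n => i.val < k), cP i := by
      intro z hz
      set m := (Finset.univ.filter (fun i : Fin n => ¬ i.val < k)).card with hm
      have hnot : ∀ i ∈ Finset.univ.filter (fun i : Fin n => ¬ i.val < k),
          min (z : WithTop ℝ) (cQ i) = (z : WithTop ℝ) := by
        intro i hi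
        rw [Finset.mem_filter] at hi
        have hji : j ≤ i := by
          rw [Fin.le_def]
          exact le_of_not_gt hi.2
        exact min_eq_left (hz.trans (hcQ hji))
      have hQsplit :
          (∑ i ∈ Finset.univ.filter (fun i : Fin n => i.val < k), min (z : WithTop ℝ) (cQ i))
            + m • (z : WithTop ℝ) = ∑ i : Fin n, min (z : WithTop ℝ) (cQ i) := by
        rw [← Finset.sum_filter_add_sum_filter_not Finset.univ (fun i : Fin n => i.val < k)
          (fun i => min (z : WithTop ℝ) (cQ i))]
        congr 1
        rw [Finset.sum_congr rfl hnot, Finset.sum_const]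
      have hPsplit :
          (∑ i : Fin n, min (z : WithTop ℝ) (cP i)) ≤
            (∑ i ∈ Finset.univ.filter (fun i : Fin n => i.val < k), cP i)
              + m • (z : WithTop ℝ) := by
        rw [← Finset.sum_filter_add_sum_filter_not Finset.univ (fun i : Fin n => i.val < k)
          (fun i => min (z : WithTop ℝ) (cP i))]
        refine add_le_add (Finset.sum_le_sum fun i _ => min_le_right _ _) ?_
        calc ∑ i ∈ Finset.univ.filter (fun i : Fin n => ¬ i.val < k),
              min (z : WithTop ℝ) (cP i)
            ≤ ∑ _i ∈ Finset.univ.filter (fun i : Fin n => ¬ i.val < k), (z : WithTop ℝ) :=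
              Finset.sum_le_sum fun i _ => min_le_left _ _
          _ = m • (z : WithTop ℝ) := Finset.sum_const _
      have hchain :
          (∑ i ∈ Finset.univ.filter (fun i : Fin n => i.val < k), min (z : WithTop ℝ) (cQ i))
            + m • (z : WithTop ℝ) ≤
          (∑ i ∈ Finset.univ.filter (fun i : Fin n => i.val < k), cP i)
            + m • (z : WithTop ℝ) := by
        rw [hQsplit]
        exact (hstar z).trans hPsplit
      have hzne : m • (z : WithTop ℝ) ≠ ⊤ := by
        rw [← WithTop.coe_nsmul]
        exact WithTop.coe_ne_top
      exact (WithTop.add_le_add_iff_right hzne).mp hchain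
    by_cases hy : (y : WithTop ℝ) ≤ cQ j
    · exact key y hy
    · push_neg at hy
      obtain ⟨t, ht, _⟩ := WithTop.lt_iff_exists_coe.mp hy
      have hcongr : ∀ i ∈ Finset.univ.filter (fun i : Fin n => i.val < k),
          min (y : WithTop ℝ) (cQ i) = min (t : WithTop ℝ) (cQ i) := by
        intro i hi
        rw [Finset.mem_filter] at hi
        have hij : i ≤ j := by
          rw [Fin.le_def]
          exact le_of_lt hi.2
        have hle : cQ i ≤ (t : WithTop ℝ) := ht ▸ hcQ hij
        rw [min_eq_right hle, min_eq_right (hle.trans (le_of_lt (ht ▸ hy)))]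
      rw [Finset.sum_congr rfl hcongr]
      exact key t (le_of_eq ht.symm)
end

section
/- The minimal tropical algebraic eigenvalue of a matrix \(A\in(\mathbb{R}\cup\{+\infty\})^{n\times n}\), i.e., the smallest root of its min-plus characteristic polynomial \(\mathrm{per}(YI\oplus A)\), equals the minimal circuit mean \(\min_{k=1,\ldots,n}\min_{i_1,\ldots,i_k}\frac{1}{k}(A_{i_1i_2}+\cdots+A_{i_ki_1})\). -/
open scoped Classical

/-- The min-plus `k`-th trace of a matrix. -/
noncomputable def minplusTrace (n : ℕ) (A : Matrix (Fin n) (Fin n) (WithTop ℝ)) (k : ℕ) :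
    WithTop ℝ :=
  (((Finset.univ : Finset (Fin n)).powersetCard k) ×ˢ
      (Finset.univ : Finset (Equiv.Perm (Fin n)))).inf
    fun p => if ∀ i, i ∉ p.1 → p.2 i = i then ∑ i ∈ p.1, A i (p.2 i) else ⊤

/-- Coefficients of the min-plus characteristic polynomial `per(Y I ⊕ A)`. -/
noncomputable def minplusCharCoeff (n : ℕ) (A : Matrix (Fin n) (Fin n) (WithTop ℝ)) :
    ℕ → WithTop ℝ :=
  fun k => minplusTrace n A (n - k)

/-- Weight of the circuit `f 0 → f 1 → ⋯ → f (k-1) → f 0`. -/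
noncomputable def cw {n : ℕ} (A : Matrix (Fin n) (Fin n) (WithTop ℝ)) (k : ℕ)
    (f : ℕ → Fin n) : WithTop ℝ :=
  ∑ j ∈ Finset.range k, A (f j) (f ((j + 1) % k))

lemma le_of_forall_coe_le {a b : WithTop ℝ}
    (h : ∀ y : ℝ, (y : WithTop ℝ) ≤ a → (y : WithTop ℝ) ≤ b) : a ≤ b := by
  cases a with
  | top =>
    cases b with
    | top => exact le_rfl
    | coe r =>
      have := h (r + 1) le_top
      rw [WithTop.coe_le_coe] at this
      linarith
  | coe r => exact h r le_rfl

lemma trace_zero (n : ℕ) (A : Matrix (Fin n) (Fin n) (WithTop ℝ)) :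
    minplusTrace n A 0 = 0 := by
  unfold minplusTrace
  apply le_antisymm
  · have hmem : ((∅ : Finset (Fin n)), (1 : Equiv.Perm (Fin n))) ∈
        (((Finset.univ : Finset (Fin n)).powersetCard 0) ×ˢ
          (Finset.univ : Finset (Equiv.Perm (Fin n)))) := by
      simp [Finset.mem_product, Finset.mem_powersetCard]
    refine le_trans (Finset.inf_le hmem) ?_
    simp
  · apply Finset.le_inf
    intro p hp
    split_ifs with h
    · rw [Finset.mem_product, Finset.mem_powersetCard] at hp
      have : p.1 = ∅ := Finset.card_eq_zero.mp hp.1.2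
      simp [this]
    · exact le_top

lemma coe_le_map_div {k : ℕ} (hk : 0 < k) (y : ℝ) (w : WithTop ℝ) :
    (y : WithTop ℝ) ≤ WithTop.map (fun r : ℝ => r / (k : ℝ)) w ↔
      (((k : ℝ) * y : ℝ) : WithTop ℝ) ≤ w := by
  have hk' : (0 : ℝ) < (k : ℝ) := by exact_mod_cast hk
  cases w with
  | top => simp
  | coe r =>
    rw [WithTop.map_coe, WithTop.coe_le_coe, WithTop.coe_le_coe,
      le_div_iff₀ hk', mul_comm]

lemma cw_congr {n : ℕ} (A : Matrix (Fin n) (Fin n) (WithTop ℝ)) (k : ℕ)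
    {f g : ℕ → Fin n} (h : ∀ j < k, f j = g j) : cw A k f = cw A k g := by
  unfold cw
  refine Finset.sum_congr rfl fun j hj => ?_
  rw [Finset.mem_range] at hj
  have hk : 0 < k := lt_of_le_of_lt (Nat.zero_le _) hj
  rw [h j hj, h _ (Nat.mod_lt _ hk)]

/-- Every circuit of length at most `n` has weight at least `k·y`, provided all
min-plus traces satisfy `trace m ≥ m·y`. -/
lemma cw_ge {n : ℕ} (A : Matrix (Fin n) (Fin n) (WithTop ℝ)) (y : ℝ)
    (htr : ∀ m, 1 ≤ m → m ≤ n → (((m : ℝ) * y : ℝ) : WithTop ℝ) ≤ minplusTrace n A m) :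
    ∀ k, 1 ≤ k → k ≤ n → ∀ f : ℕ → Fin n,
      (((k : ℝ) * y : ℝ) : WithTop ℝ) ≤ cw A k f := by
  intro k
  induction k using Nat.strong_induction_on with
  | _ k IH =>
  intro hk1 hkn f
  by_cases hinj : ∀ a < k, ∀ b < k, f a = f b → a = b
  · -- injective case: this is a simple circuit, bounded by the `k`-th trace
    set l : List (Fin n) := (List.range k).map f with hl
    have hlen : l.length = k := by simp [hl]
    have hnodup : l.Nodup := by
      refine List.Nodup.map_on ?_ List.nodup_range
      intro a ha b hb hab
      rw [List.mem_range] at ha hb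
      exact hinj a ha b hb hab
    set σ : Equiv.Perm (Fin n) := l.formPerm with hσ
    set S : Finset (Fin n) := (Finset.range k).image f with hS
    have hcard : S.card = k := by
      rw [hS, Finset.card_image_of_injOn, Finset.card_range]
      intro a ha b hb hab
      rw [Finset.coe_range, Set.mem_Iio] at ha hb
      exact hinj a ha b hb hab
    have hmem : (S, σ) ∈
        (((Finset.univ : Finset (Fin n)).powersetCard k) ×ˢ
          (Finset.univ : Finset (Equiv.Perm (Fin n)))) := by
      simp [Finset.mem_product, Finset.mem_powersetCard, hcard]
    have hfix : ∀ i, i ∉ S → σ i = i := by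
      intro i hi
      apply List.formPerm_apply_of_notMem
      intro hmem'
      rw [hl, List.mem_map] at hmem'
      obtain ⟨a, ha, rfl⟩ := hmem'
      rw [List.mem_range] at ha
      exact hi (Finset.mem_image.mpr ⟨a, Finset.mem_range.mpr ha, rfl⟩)
    have hval : ∑ i ∈ S, A i (σ i) = cw A k f := by
      rw [hS, Finset.sum_image (by
        intro a ha b hb hab
        rw [Finset.coe_range, Set.mem_Iio] at ha hb
        exact hinj a ha b hb hab)]
      unfold cw
      refine Finset.sum_congr rfl fun j hj => ?_
      rw [Finset.mem_range] at hj
      have h1 : f j = l[j]'(by omega) := by simp [hl]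
      have h2 : σ (f j) = f ((j + 1) % k) := by
        rw [h1, hσ, List.formPerm_apply_getElem _ hnodup j (by omega)]
        simp [hl, hlen]
      rw [h2]
    have htrace : minplusTrace n A k ≤ cw A k f := by
      rw [← hval]
      refine le_trans (Finset.inf_le hmem) ?_
      rw [if_pos hfix]
    exact le_trans (htr k hk1 hkn) htrace
  · -- non-injective case: split the circuit into two shorter circuits
    push_neg at hinj
    obtain ⟨a', ha', b', hb', hfab', hne⟩ := hinj
    -- arrange a < b
    obtain ⟨a, b, hab, hbk, hfab⟩ : ∃ a b, a < b ∧ b < k ∧ f a = f b := by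
      rcases lt_or_gt_of_ne hne with h | h
      · exact ⟨a', b', h, hb', hfab'⟩
      · exact ⟨b', a', h, ha', hfab'.symm⟩
    set k1 := b - a with hk1def
    set k2 := k - (b - a) with hk2def
    have hak : a < k := lt_trans hab hbk
    have hk1pos : 1 ≤ k1 := by omega
    have hk1lt : k1 < k := by omega
    have hk2pos : 1 ≤ k2 := by omega
    have hk2lt : k2 < k := by omega
    set g : ℕ → Fin n := fun j => f (a + j) with hg
    set h2 : ℕ → Fin n := fun j => f ((b + j) % k) with hh2
    set e : ℕ → WithTop ℝ := fun j => A (f j) (f ((j + 1) % k)) with he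
    have hcw1 : cw A k1 g = ∑ j ∈ Finset.Ico a b, e j := by
      rw [Finset.sum_Ico_eq_sum_range]
      unfold cw
      refine Finset.sum_congr (by rw [hk1def]) fun j hj => ?_
      rw [Finset.mem_range] at hj
      have harg2 : g ((j + 1) % k1) = f ((a + j + 1) % k) := by
        have hmodk : (a + j + 1) % k = a + j + 1 := Nat.mod_eq_of_lt (by omega)
        rcases Nat.lt_or_ge (j + 1) k1 with h | h
        · show f (a + (j + 1) % k1) = f ((a + j + 1) % k)
          rw [Nat.mod_eq_of_lt h, hmodk]
          exact congrArg f (by omega)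
        · have hj1 : (j + 1) % k1 = 0 := by
            have : j + 1 = k1 := by omega
            rw [this, Nat.mod_self]
          show f (a + (j + 1) % k1) = f ((a + j + 1) % k)
          rw [hj1, hmodk, Nat.add_zero]
          have hb' : a + j + 1 = b := by omega
          rw [hb']
          exact hfab
      show A (g j) (g ((j + 1) % k1)) = A (f (a + j)) (f ((a + j + 1) % k))
      rw [harg2]
    have hcw2 : cw A k2 h2 = (∑ j ∈ Finset.Ico b k, e j) + ∑ j ∈ Finset.range a, e j := by
      have hterm : ∀ j < k2,
          A (h2 j) (h2 ((j + 1) % k2)) = e ((b + j) % k) := by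
        intro j hj
        have harg2 : h2 ((j + 1) % k2) = f ((b + j + 1) % k) := by
          rcases Nat.lt_or_ge (j + 1) k2 with h | h
          · show f ((b + (j + 1) % k2) % k) = f ((b + j + 1) % k)
            rw [Nat.mod_eq_of_lt h]
            exact congrArg (fun t => f (t % k)) (by omega : b + (j + 1) = b + j + 1)
          · have hj1 : (j + 1) % k2 = 0 := by
              have : j + 1 = k2 := by omega
              rw [this, Nat.mod_self]
            show f ((b + (j + 1) % k2) % k) = f ((b + j + 1) % k)
            rw [hj1, Nat.add_zero, Nat.mod_eq_of_lt hbk]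
            have h1 : b + j + 1 = k + a := by omega
            rw [h1, Nat.add_mod_left, Nat.mod_eq_of_lt hak]
            exact hfab.symm
        show A (f ((b + j) % k)) (h2 ((j + 1) % k2)) =
          A (f ((b + j) % k)) (f (((b + j) % k + 1) % k))
        rw [harg2, Nat.mod_add_mod]
      unfold cw
      calc ∑ j ∈ Finset.range k2, A (h2 j) (h2 ((j + 1) % k2))
          = ∑ j ∈ Finset.range k2, e ((b + j) % k) := by
            refine Finset.sum_congr rfl fun j hj => ?_
            rw [Finset.mem_range] at hj
            exact hterm j hj
        _ = (∑ j ∈ Finset.range (k - b), e ((b + j) % k)) +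
              ∑ j ∈ Finset.Ico (k - b) k2, e ((b + j) % k) :=
            (Finset.sum_range_add_sum_Ico _ (by omega : k - b ≤ k2)).symm
        _ = (∑ j ∈ Finset.Ico b k, e j) + ∑ j ∈ Finset.range a, e j := by
            congr 1
            · rw [Finset.sum_Ico_eq_sum_range]
              refine Finset.sum_congr rfl fun j hj => ?_
              rw [Finset.mem_range] at hj
              congr 1
              exact Nat.mod_eq_of_lt (by omega)
            · rw [Finset.sum_Ico_eq_sum_range]
              have hcount : k2 - (k - b) = a := by omega
              rw [hcount]
              refine Finset.sum_congr rfl fun j hj => ?_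
              rw [Finset.mem_range] at hj
              congr 1
              have h1 : b + (k - b + j) = k + j := by omega
              rw [h1, Nat.add_mod_left, Nat.mod_eq_of_lt (by omega)]
    have hsplit : cw A k f = cw A k1 g + cw A k2 h2 := by
      rw [hcw1, hcw2]
      have h1 : cw A k f = ∑ j ∈ Finset.range k, e j := rfl
      rw [h1, Finset.range_eq_Ico,
        ← Finset.sum_Ico_consecutive e (Nat.zero_le a) (le_of_lt hak),
        ← Finset.sum_Ico_consecutive e (le_of_lt hab) (le_of_lt hbk)]
      rw [← Finset.range_eq_Ico]
      abel
    have hIH1 := IH k1 hk1lt hk1pos (by omega) g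
    have hIH2 := IH k2 hk2lt hk2pos (by omega) h2
    have hkk : ((k : ℝ) * y : ℝ) = (k1 : ℝ) * y + (k2 : ℝ) * y := by
      have : k1 + k2 = k := by omega
      rw [← this]
      push_cast
      ring
    rw [hsplit, hkk, WithTop.coe_add]
    exact add_le_add hIH1 hIH2

/-- Any permutation-supported sum over a set of size `m` is at least `m·y`,
provided all circuits of length at most `n` have weight at least length times `y`. -/
lemma perm_sum_ge {n : ℕ} (A : Matrix (Fin n) (Fin n) (WithTop ℝ)) (y : ℝ)
    (hcw : ∀ k, 1 ≤ k → k ≤ n → ∀ f : ℕ → Fin n,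
      (((k : ℝ) * y : ℝ) : WithTop ℝ) ≤ cw A k f) :
    ∀ m, m ≤ n → ∀ (S : Finset (Fin n)) (σ : Equiv.Perm (Fin n)), S.card = m →
      (∀ i, i ∉ S → σ i = i) → (((m : ℝ) * y : ℝ) : WithTop ℝ) ≤ ∑ i ∈ S, A i (σ i) := by
  intro m
  induction m using Nat.strong_induction_on with
  | _ m IH =>
  intro hmn S σ hcard hfix
  rcases Nat.eq_zero_or_pos m with rfl | hm
  · have : S = ∅ := Finset.card_eq_zero.mp hcard
    subst this
    simp
  · obtain ⟨i₀, hi₀⟩ : S.Nonempty := Finset.card_pos.mp (by omega)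
    have hinv : ∀ i ∈ S, σ i ∈ S := by
      intro i hi
      by_contra hσi
      have h1 : σ (σ i) = σ i := hfix (σ i) hσi
      have h2 : σ i = i := σ.injective h1
      rw [h2] at hσi
      exact hσi hi
    have hpowmem : ∀ r : ℕ, (σ ^ r) i₀ ∈ S := by
      intro r
      induction r with
      | zero => simpa using hi₀
      | succ r ih =>
        rw [pow_succ', Equiv.Perm.mul_apply]
        exact hinv _ ih
    set l := Function.minimalPeriod (⇑σ) i₀ with hldef
    have hper : i₀ ∈ Function.periodicPts (⇑σ) := by
      refine ⟨orderOf σ, orderOf_pos σ, ?_⟩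
      show (⇑σ)^[orderOf σ] i₀ = i₀
      rw [Equiv.Perm.iterate_eq_pow, pow_orderOf_eq_one]
      rfl
    have hl : 0 < l := Function.minimalPeriod_pos_of_mem_periodicPts hper
    have hlper : (σ ^ l) i₀ = i₀ := by
      have := Function.iterate_minimalPeriod (f := ⇑σ) (x := i₀)
      rwa [Equiv.Perm.iterate_eq_pow] at this
    set O : Finset (Fin n) := (Finset.range l).image (fun r => (σ ^ r) i₀) with hO
    have hinjO : Set.InjOn (fun r => (σ ^ r) i₀) ↑(Finset.range l) := by
      rw [Finset.coe_range]
      have := Function.iterate_injOn_Iio_minimalPeriod (f := ⇑σ) (x := i₀)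
      intro r hr s hs hrs
      refine this hr hs ?_
      simpa [Equiv.Perm.iterate_eq_pow] using hrs
    have hcardO : O.card = l := by
      rw [hO, Finset.card_image_of_injOn hinjO, Finset.card_range]
    have hOS : O ⊆ S := by
      intro i hi
      rw [hO, Finset.mem_image] at hi
      obtain ⟨r, _, rfl⟩ := hi
      exact hpowmem r
    have hlm : l ≤ m := by
      have := Finset.card_le_card hOS
      omega
    have hSC : ∀ i, σ.SameCycle i₀ i ↔ i ∈ O := by
      intro i
      constructor
      · intro hsc
        obtain ⟨r, _, hr⟩ := Equiv.Perm.SameCycle.exists_pow_eq' hsc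
        have : (σ ^ (r % l)) i₀ = (σ ^ r) i₀ :=
          Function.iterate_mod_minimalPeriod_eq
        rw [hO, Finset.mem_image]
        exact ⟨r % l, Finset.mem_range.mpr (Nat.mod_lt _ hl), by rw [this, hr]⟩
      · intro hi
        rw [hO, Finset.mem_image] at hi
        obtain ⟨r, _, rfl⟩ := hi
        exact ⟨(r : ℤ), by simp [zpow_natCast]⟩
    -- the circuit along the orbit of i₀
    have hcycle : cw A l (fun j => (σ ^ j) i₀) = ∑ i ∈ O, A i (σ i) := by
      rw [hO, Finset.sum_image (fun a ha b hb hab => hinjO (by simpa using ha)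
        (by simpa using hb) hab)]
      unfold cw
      refine Finset.sum_congr rfl fun j hj => ?_
      rw [Finset.mem_range] at hj
      congr 1
      show (σ ^ ((j + 1) % l)) i₀ = σ ((σ ^ j) i₀)
      have hmod : (σ ^ ((j + 1) % l)) i₀ = (σ ^ (j + 1)) i₀ :=
        Function.iterate_mod_minimalPeriod_eq
      rw [hmod, pow_succ', Equiv.Perm.mul_apply]
    have hO1 : (((l : ℝ) * y : ℝ) : WithTop ℝ) ≤ ∑ i ∈ O, A i (σ i) := by
      rw [← hcycle]
      exact hcw l hl (le_trans hlm hmn) _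
    -- remove the cycle of i₀ from σ
    set σ' : Equiv.Perm (Fin n) := σ * (σ.cycleOf i₀)⁻¹ with hσ'
    have hσ'eq : ∀ i, σ' i = if i ∈ O then i else σ i := by
      intro i
      rw [hσ', Equiv.Perm.mul_apply, Equiv.Perm.cycleOf_inv, Equiv.Perm.cycleOf_apply]
      by_cases hsc : σ.SameCycle i₀ i
      · rw [if_pos (Equiv.Perm.sameCycle_inv.mpr hsc), if_pos ((hSC i).mp hsc)]
        simp
      · rw [if_neg (fun h => hsc (Equiv.Perm.sameCycle_inv.mp h)),
          if_neg (fun h => hsc ((hSC i).mpr h))]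
    have hfix' : ∀ i, i ∉ S \ O → σ' i = i := by
      intro i hi
      rw [Finset.mem_sdiff, not_and_or, not_not] at hi
      rcases hi with hi | hi
      · rw [hσ'eq, if_neg (fun h => hi (hOS h)), hfix i hi]
      · rw [hσ'eq, if_pos hi]
    have hcard' : (S \ O).card = m - l := by
      rw [Finset.card_sdiff_of_subset hOS, hcard, hcardO]
    have hrec := IH (m - l) (by omega) (by omega) (S \ O) σ' hcard' hfix'
    have hrec' : (((↑(m - l) : ℝ) * y : ℝ) : WithTop ℝ) ≤ ∑ i ∈ S \ O, A i (σ i) := by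
      refine le_trans hrec (le_of_eq ?_)
      refine Finset.sum_congr rfl fun i hi => ?_
      rw [Finset.mem_sdiff] at hi
      rw [hσ'eq, if_neg hi.2]
    have hsum : (∑ i ∈ S \ O, A i (σ i)) + ∑ i ∈ O, A i (σ i) = ∑ i ∈ S, A i (σ i) :=
      Finset.sum_sdiff hOS
    have hcast : ((m : ℝ) * y : ℝ) = (↑(m - l) : ℝ) * y + (l : ℝ) * y := by
      have h1 : ((m - l : ℕ) : ℝ) = (m : ℝ) - (l : ℝ) := by
        rw [Nat.cast_sub hlm]
      rw [h1]; ring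
    calc (((m : ℝ) * y : ℝ) : WithTop ℝ)
        = ((↑(m - l) : ℝ) * y : ℝ) + (((l : ℝ) * y : ℝ) : WithTop ℝ) := by
          rw [← WithTop.coe_add, hcast]
      _ ≤ (∑ i ∈ S \ O, A i (σ i)) + ∑ i ∈ O, A i (σ i) := add_le_add hrec' hO1
      _ = ∑ i ∈ S, A i (σ i) := hsum

lemma trace_ge {n : ℕ} (A : Matrix (Fin n) (Fin n) (WithTop ℝ)) (y : ℝ)
    (hcw : ∀ k, 1 ≤ k → k ≤ n → ∀ f : ℕ → Fin n,
      (((k : ℝ) * y : ℝ) : WithTop ℝ) ≤ cw A k f)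
    (m : ℕ) (hmn : m ≤ n) :
    (((m : ℝ) * y : ℝ) : WithTop ℝ) ≤ minplusTrace n A m := by
  unfold minplusTrace
  apply Finset.le_inf
  intro p hp
  split_ifs with h
  · rw [Finset.mem_product, Finset.mem_powersetCard] at hp
    exact perm_sum_ge A y hcw m hmn p.1 p.2 hp.1.2 h
  · exact le_top

/-- The minimal tropical eigenvalue (smallest root `c 0` of the min-plus
characteristic polynomial, whose roots are `c 0 ≤ ⋯ ≤ c (n-1)`) is the minimal
circuit mean `min_{1 ≤ k ≤ n} min_{i₁,…,i_k} (A_{i₁ i₂} + ⋯ + A_{i_k i₁}) / k`. -/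
theorem stmt_9 (n : ℕ) (hn : 0 < n) (A : Matrix (Fin n) (Fin n) (WithTop ℝ))
    (c : Fin n → WithTop ℝ) (hc : Monotone c)
    (hfact : ∀ y : ℝ,
      tropEval (minplusCharCoeff n A) n y =
        minplusCharCoeff n A n + ∑ i : Fin n, min (y : WithTop ℝ) (c i)) :
    IsLeast {t : WithTop ℝ | ∃ k : ℕ, 1 ≤ k ∧ k ≤ n ∧ ∃ f : ℕ → Fin n,
        t = WithTop.map (fun r : ℝ => r / (k : ℝ))
          (∑ j ∈ Finset.range k, A (f j) (f ((j + 1) % k)))}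
      (c ⟨0, hn⟩) := by
  have h0 : minplusCharCoeff n A n = 0 := by
    unfold minplusCharCoeff
    rw [Nat.sub_self]
    exact trace_zero n A
  have hc0le : ∀ i : Fin n, c ⟨0, hn⟩ ≤ c i := fun i => hc (by simp [Fin.le_def])
  -- H1 : y ≤ c₀ implies all trace bounds
  have H1 : ∀ y : ℝ, (y : WithTop ℝ) ≤ c ⟨0, hn⟩ → ∀ m, m ≤ n →
      (((m : ℝ) * y : ℝ) : WithTop ℝ) ≤ minplusTrace n A m := by
    intro y hy m hmn
    have hmin : ∀ i : Fin n, min (y : WithTop ℝ) (c i) = (y : WithTop ℝ) :=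
      fun i => min_eq_left (le_trans hy (hc0le i))
    have hsum : (∑ i : Fin n, min (y : WithTop ℝ) (c i)) = (((n : ℝ) * y : ℝ) : WithTop ℝ) := by
      rw [Finset.sum_congr rfl fun i _ => hmin i, Finset.sum_const, Finset.card_univ,
        Fintype.card_fin, ← WithTop.coe_nsmul]
      congr 1
      simp [nsmul_eq_mul]
    have heval : tropEval (minplusCharCoeff n A) n y = (((n : ℝ) * y : ℝ) : WithTop ℝ) := by
      rw [hfact y, h0, hsum, zero_add]
    have hle : tropEval (minplusCharCoeff n A) n y ≤
        minplusCharCoeff n A (n - m) + (((↑(n - m) : ℝ) * y : ℝ) : WithTop ℝ) := by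
      exact Finset.inf_le (Finset.mem_range.mpr (by omega))
    rw [heval] at hle
    have hcoeff : minplusCharCoeff n A (n - m) = minplusTrace n A m := by
      unfold minplusCharCoeff
      congr 1
      omega
    rw [hcoeff] at hle
    have hcast : ((n : ℝ) * y : ℝ) = (m : ℝ) * y + (↑(n - m) : ℝ) * y := by
      rw [Nat.cast_sub hmn]; ring
    rw [hcast, WithTop.coe_add] at hle
    exact (WithTop.add_le_add_iff_right (WithTop.coe_ne_top)).mp
      (le_trans hle (add_le_add_right le_rfl _))
  -- H2 : all trace bounds imply y ≤ c₀
  have H2 : ∀ y : ℝ, (∀ m, 1 ≤ m → m ≤ n →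
      (((m : ℝ) * y : ℝ) : WithTop ℝ) ≤ minplusTrace n A m) → (y : WithTop ℝ) ≤ c ⟨0, hn⟩ := by
    intro y hy
    have htr : ∀ m, m ≤ n → (((m : ℝ) * y : ℝ) : WithTop ℝ) ≤ minplusTrace n A m := by
      intro m hmn
      rcases Nat.eq_zero_or_pos m with rfl | hm
      · rw [trace_zero n A]
        simp
      · exact hy m hm hmn
    have heval : tropEval (minplusCharCoeff n A) n y = (((n : ℝ) * y : ℝ) : WithTop ℝ) := by
      apply le_antisymm
      · have hmem : n ∈ Finset.range (n + 1) := Finset.mem_range.mpr (by omega)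
        refine le_trans (Finset.inf_le hmem) ?_
        rw [h0, zero_add]
      · apply Finset.le_inf
        intro k hk
        rw [Finset.mem_range] at hk
        have hkn : k ≤ n := by omega
        have hcast : ((n : ℝ) * y : ℝ) = (↑(n - k) : ℝ) * y + (k : ℝ) * y := by
          rw [Nat.cast_sub hkn]; ring
        rw [hcast, WithTop.coe_add]
        exact add_le_add (htr (n - k) (by omega)) le_rfl
    rw [hfact y, h0, zero_add] at heval
    have hyc : ∀ i : Fin n, (y : WithTop ℝ) ≤ c i := by
      intro i₀
      by_contra hlt
      rw [not_le] at hlt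
      have h1 : (∑ i : Fin n, min (y : WithTop ℝ) (c i)) =
          min (y : WithTop ℝ) (c i₀) +
            ∑ i ∈ Finset.univ.erase i₀, min (y : WithTop ℝ) (c i) :=
        (Finset.add_sum_erase _ _ (Finset.mem_univ i₀)).symm
      have h2 : (∑ i ∈ Finset.univ.erase i₀, min (y : WithTop ℝ) (c i)) ≤
          ((((n : ℝ) - 1) * y : ℝ) : WithTop ℝ) := by
        refine le_trans (Finset.sum_le_sum fun i _ => min_le_left _ (c i)) ?_
        rw [Finset.sum_const, Finset.card_erase_of_mem (Finset.mem_univ i₀),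
          Finset.card_univ, Fintype.card_fin, ← WithTop.coe_nsmul]
        rw [WithTop.coe_le_coe, nsmul_eq_mul, Nat.cast_sub hn]
        simp
      have hstrict : (∑ i : Fin n, min (y : WithTop ℝ) (c i)) <
          (((n : ℝ) * y : ℝ) : WithTop ℝ) := by
        calc (∑ i : Fin n, min (y : WithTop ℝ) (c i))
            = min (y : WithTop ℝ) (c i₀) +
                ∑ i ∈ Finset.univ.erase i₀, min (y : WithTop ℝ) (c i) := h1
          _ ≤ min (y : WithTop ℝ) (c i₀) + ((((n : ℝ) - 1) * y : ℝ) : WithTop ℝ) :=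
              add_le_add_right h2 _
          _ = ((((n : ℝ) - 1) * y : ℝ) : WithTop ℝ) + min (y : WithTop ℝ) (c i₀) :=
              add_comm _ _
          _ < ((((n : ℝ) - 1) * y : ℝ) : WithTop ℝ) + (y : WithTop ℝ) :=
              WithTop.add_lt_add_left WithTop.coe_ne_top
                (lt_of_le_of_lt (min_le_right _ _) hlt)
          _ = (((n : ℝ) * y : ℝ) : WithTop ℝ) := by
              rw [← WithTop.coe_add, WithTop.coe_eq_coe]
              ring
      rw [heval] at hstrict
      exact lt_irrefl _ hstrict
    exact hyc ⟨0, hn⟩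
  -- the finite minimum over all circuits
  set F : Finset (ℕ × (Fin n → Fin n)) := (Finset.Icc 1 n) ×ˢ Finset.univ with hF
  set v : ℕ × (Fin n → Fin n) → WithTop ℝ := fun p =>
    WithTop.map (fun r : ℝ => r / (p.1 : ℝ))
      (cw A p.1 (fun j => p.2 ⟨j % n, Nat.mod_lt _ hn⟩)) with hv
  have hFne : F.Nonempty := by
    refine ⟨(1, fun _ => ⟨0, hn⟩), ?_⟩
    rw [hF, Finset.mem_product]
    exact ⟨Finset.mem_Icc.mpr ⟨le_rfl, hn⟩, Finset.mem_univ _⟩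
  set D := F.inf v with hD
  -- reduction of periodised circuits
  have hcwmod : ∀ k, k ≤ n → ∀ f : ℕ → Fin n,
      cw A k (fun j => (fun i : Fin n => f (i : ℕ)) ⟨j % n, Nat.mod_lt _ hn⟩) = cw A k f := by
    intro k hkn f
    refine cw_congr A k fun j hj => ?_
    show f ((⟨j % n, Nat.mod_lt _ hn⟩ : Fin n) : ℕ) = f j
    congr 1
    exact Nat.mod_eq_of_lt (by omega)
  -- key equivalence
  have key1 : ∀ y : ℝ, (y : WithTop ℝ) ≤ c ⟨0, hn⟩ → (y : WithTop ℝ) ≤ D := by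
    intro y hy
    have htr := H1 y hy
    have hcw := cw_ge A y (fun m hm1 hmn => htr m hmn)
    rw [hD]
    apply Finset.le_inf
    intro p hp
    rw [hF, Finset.mem_product, Finset.mem_Icc] at hp
    rw [hv]
    rw [coe_le_map_div hp.1.1 y]
    exact hcw p.1 hp.1.1 hp.1.2 _
  have key2 : ∀ y : ℝ, (y : WithTop ℝ) ≤ D → (y : WithTop ℝ) ≤ c ⟨0, hn⟩ := by
    intro y hy
    have hcw : ∀ k, 1 ≤ k → k ≤ n → ∀ f : ℕ → Fin n,
        (((k : ℝ) * y : ℝ) : WithTop ℝ) ≤ cw A k f := by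
      intro k hk1 hkn f
      have hmem : (k, fun i : Fin n => f (i : ℕ)) ∈ F := by
        rw [hF, Finset.mem_product]
        exact ⟨Finset.mem_Icc.mpr ⟨hk1, hkn⟩, Finset.mem_univ _⟩
      have := le_trans hy (Finset.inf_le hmem)
      rw [hv] at this
      simp only at this
      rw [coe_le_map_div hk1 y] at this
      rwa [hcwmod k hkn f] at this
    exact H2 y fun m hm1 hmn => trace_ge A y hcw m hmn
  have hc0D : c ⟨0, hn⟩ = D :=
    le_antisymm (le_of_forall_coe_le key1) (le_of_forall_coe_le key2)
  constructor
  · -- membership: the minimum is attained by some circuit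
    obtain ⟨p, hpF, hpD⟩ := Finset.exists_mem_eq_inf F hFne v
    rw [hF, Finset.mem_product, Finset.mem_Icc] at hpF
    refine ⟨p.1, hpF.1.1, hpF.1.2, fun j => p.2 ⟨j % n, Nat.mod_lt _ hn⟩, ?_⟩
    rw [hc0D, hD, hpD]
    rfl
  · -- lower bound
    rintro t ⟨k, hk1, hkn, f, rfl⟩
    rw [hc0D, hD]
    have hmem : (k, fun i : Fin n => f (i : ℕ)) ∈ F := by
      rw [hF, Finset.mem_product]
      exact ⟨Finset.mem_Icc.mpr ⟨hk1, hkn⟩, Finset.mem_univ _⟩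
    refine le_trans (Finset.inf_le hmem) (le_of_eq ?_)
    rw [hv]
    simp only
    rw [hcwmod k hkn f]
    rfl
end

section
/- Let R be a commutative ring with a quasi-valuation e, and \(R^\dagger=\{f\in R: e(fg)=e(f)+e(g)\ \forall g\in R\}\). Let \(\mathcal P=\sum_{k=0}^n\mathcal P_kY^k\in R[Y]\) with \(\mathcal P_n=1\). If \(\mathcal P\) has n roots in R (counted with multiplicities, i.e., \(\mathcal P\) splits as \(\prod_i(Y-\mathcal Y_i)\)) and all roots belong to \(R^\dagger\), then the multiset \((e(\mathcal Y_1),\ldots,e(\mathcal Y_n))\) equals the multiset of tropical roots of the min-plus polynomial \(\bigoplus_{k=0}^n e(\mathcal P_k)Y^k\). -/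
open scoped Classical

section Helpers
variable {R : Type*} [CommRing R] (e : R → WithTop ℝ)
  (he_add : ∀ f g, min (e f) (e g) ≤ e (f + g))
  (he_mul : ∀ f g, e f + e g ≤ e (f * g))
  (he_neg : e (-1) = 0)

include he_mul he_neg in
lemma qv_one : e 1 = 0 := by
  have h1 : (0 : WithTop ℝ) ≤ e 1 := by
    have := he_mul (-1) (-1); rw [he_neg] at this; simpa using this
  have h2 : e 1 ≤ 0 := by
    have := he_mul 1 (-1); rw [he_neg] at this; simp at this
    calc e 1 = e 1 + 0 := (add_zero _).symm
    _ ≤ e (-1) := by simpa using this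
    _ = 0 := he_neg
  exact le_antisymm h2 h1

include he_mul he_neg in
lemma qv_neg (f : R) : e (-f) = e f := by
  have key : ∀ g : R, e g ≤ e (-g) := by
    intro g
    have := he_mul (-1) g
    rw [he_neg, zero_add, neg_one_mul] at this
    exact this
  have h1 := key f
  have h2 := key (-f)
  rw [neg_neg] at h2
  exact le_antisymm h2 h1

include he_add he_mul he_neg in
lemma qv_add_left {f g : R} (h : e f < e g) : e (f + g) = e f := by
  refine le_antisymm ?_ (by simpa [min_eq_left h.le] using he_add f g)
  by_contra hc
  push_neg at hc
  have hh := he_add (f + g) (-g)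
  rw [qv_neg e he_mul he_neg, add_neg_cancel_right] at hh
  exact absurd hh (not_le.2 (lt_min hc h))

include he_add he_mul he_neg in
lemma qv_sub_left {f g : R} (h : e f < e g) : e (f - g) = e f := by
  rw [sub_eq_add_neg]
  exact qv_add_left e he_add he_mul he_neg (by rwa [qv_neg e he_mul he_neg])

include he_add he_mul he_neg in
lemma qv_sub_right {f g : R} (h : e g < e f) : e (f - g) = e g := by
  rw [sub_eq_add_neg, add_comm, ← qv_neg e he_mul he_neg g]
  exact qv_add_left e he_add he_mul he_neg (by rwa [qv_neg e he_mul he_neg])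

include he_add he_mul he_neg in
lemma qv_sub_ge (f g : R) : min (e f) (e g) ≤ e (f - g) := by
  rw [sub_eq_add_neg]
  have := he_add f (-g)
  rwa [qv_neg e he_mul he_neg] at this
end Helpers

section Key
variable {R : Type*} [CommRing R] (e : R → WithTop ℝ)
  (he_add : ∀ f g, min (e f) (e g) ≤ e (f + g))
  (he_mul : ∀ f g, e f + e g ≤ e (f * g))
  (he_neg : e (-1) = 0)

open Polynomial

set_option maxHeartbeats 1000000 in
include he_add he_mul he_neg in
lemma qv_key : ∀ (n : ℕ) (Y : Fin n → R),
    (∀ i, ∀ g : R, e (Y i * g) = e (Y i) + e g) → ∀ y : ℝ,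
    tropEval (fun k => e ((∏ i : Fin n, (X - C (Y i))).coeff k)) n y
      = ∑ i : Fin n, min (y : WithTop ℝ) (e (Y i)) := by
  intro n
  induction n with
  | zero =>
      intro Y hdag y
      simp [tropEval, qv_one e he_mul he_neg]
  | succ n ih =>
      intro Y hdag y
      have hIH := ih (fun i => Y i.castSucc) (fun i g => hdag _ g) y
      set q : R[X] := ∏ i : Fin n, (X - C (Y i.castSucc)) with hq
      set a : R := Y (Fin.last n) with ha
      have hprod : ∏ i : Fin (n+1), (X - C (Y i)) = q * (X - C a) := by
        rw [Fin.prod_univ_castSucc]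
      have hdagA : ∀ g : R, e (a * g) = e (a) + e g := fun g => hdag _ g
      -- abbreviations
      set g : ℕ → WithTop ℝ := fun k => e (q.coeff k) + (((k : ℝ) * y : ℝ) : WithTop ℝ)
        with hgdef
      set T : WithTop ℝ := (Finset.range (n+1)).inf g with hTdef
      have hIH' : T = ∑ i : Fin n, min (y : WithTop ℝ) (e (Y i.castSucc)) := hIH
      set m : WithTop ℝ := min (y : WithTop ℝ) (e a) with hm
      have hsum : ∑ i : Fin (n+1), min (y : WithTop ℝ) (e (Y i)) = T + m := by
        rw [Fin.sum_univ_castSucc, hIH']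
      rw [hprod, hsum]
      -- coefficient facts
      have hmonic : ∀ i ∈ (Finset.univ : Finset (Fin n)), (X - C (Y i.castSucc)).Monic :=
        fun i _ => monic_X_sub_C _
      have hdeg : q.natDegree ≤ n := by
        have h := natDegree_prod_le (Finset.univ) (fun i : Fin n => X - C (Y i.castSucc))
        have h2 := Finset.sum_le_sum (s := (Finset.univ : Finset (Fin n)))
          (g := fun _ => 1) (fun i _ => natDegree_X_sub_C_le (Y i.castSucc))
        rw [hq]
        refine h.trans (h2.trans ?_)
        simp
      have hqtop : q.coeff (n+1) = 0 :=
        coeff_eq_zero_of_natDegree_lt (by omega)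
      have hc0 : (q * (X - C a)).coeff 0 = -(a * q.coeff 0) := by
        rw [mul_coeff_zero]
        simp [mul_comm]
      have hck : ∀ k : ℕ, (q * (X - C a)).coeff (k+1) = q.coeff k - q.coeff (k+1) * a :=
        fun k => coeff_mul_X_sub_C
      have hctop : (q * (X - C a)).coeff (n+1) = q.coeff n := by
        rw [hck n, hqtop, zero_mul, sub_zero]
      have ea0 : e ((q * (X - C a)).coeff 0) = e a + e (q.coeff 0) := by
        rw [hc0, qv_neg e he_mul he_neg, hdagA]
      have hcast : ∀ k : ℕ, ((((k+1 : ℕ) : ℝ) * y : ℝ) : WithTop ℝ)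
          = (((k : ℝ) * y : ℝ) : WithTop ℝ) + ((y : ℝ) : WithTop ℝ) := by
        intro k
        rw [← WithTop.coe_add]
        norm_cast
        push_cast
        ring
      have hTle : ∀ j : ℕ, j ≤ n → T ≤ g j := by
        intro j hj
        exact Finset.inf_le (Finset.mem_range.2 (by omega))
      have hytop : ((y : ℝ) : WithTop ℝ) ≠ ⊤ := WithTop.coe_ne_top
      have hcoetop : ∀ x : ℝ, ((x : ℝ) : WithTop ℝ) ≠ ⊤ := fun x => WithTop.coe_ne_top
      have hmy : m ≤ ((y : ℝ) : WithTop ℝ) := min_le_left _ _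
      have hma : m ≤ e a := min_le_right _ _
      refine le_antisymm ?_ ?_
      · -- inf ≤ T + m
        by_cases hTtop : T = ⊤
        · rw [hTtop, top_add]; exact le_top
        obtain ⟨j₁, hj₁, hj₁eq⟩ :=
          Finset.exists_mem_eq_inf (Finset.range (n+1)) ⟨0, Finset.mem_range.2 (by omega)⟩ g
        have hSne : ((Finset.range (n+1)).filter (fun j => g j = T)).Nonempty :=
          ⟨j₁, Finset.mem_filter.2 ⟨hj₁, hj₁eq.symm⟩⟩
        obtain ⟨k₀, hk₀n, hgk₀, hmax⟩ :
            ∃ k₀, k₀ ≤ n ∧ g k₀ = T ∧ ∀ j : ℕ, j ≤ n → k₀ < j → T < g j := by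
          refine ⟨((Finset.range (n+1)).filter (fun j => g j = T)).max' hSne, ?_, ?_, ?_⟩
          · have := Finset.max'_mem _ hSne
            rw [Finset.mem_filter, Finset.mem_range] at this
            omega
          · have := Finset.max'_mem _ hSne
            rw [Finset.mem_filter] at this
            exact this.2
          · intro j hj hlt
            rcases (hTle j hj).lt_or_eq with h | h
            · exact h
            · exfalso
              have hjS : j ∈ (Finset.range (n+1)).filter (fun j => g j = T) :=
                Finset.mem_filter.2 ⟨Finset.mem_range.2 (by omega), h.symm⟩
              have := Finset.le_max' _ j hjS
              omega
        have h1 : ∀ k : ℕ, e (q.coeff k * a) = e a + e (q.coeff k) := by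
          intro k; rw [mul_comm, hdagA]
        rcases le_or_gt ((y : ℝ) : WithTop ℝ) (e a) with hcase | hcase
        · -- m = y, use index k₀ + 1
          have hmeq : m = ((y : ℝ) : WithTop ℝ) := min_eq_left hcase
          have hmem : k₀ + 1 ∈ Finset.range (n + 1 + 1) := Finset.mem_range.2 (by omega)
          refine le_trans (Finset.inf_le hmem) (le_of_eq ?_)
          beta_reduce
          by_cases hk₀top : k₀ = n
          · rw [hk₀top] at hgk₀
            rw [hk₀top]
            have hgT : e (q.coeff n) + ((((n : ℕ) : ℝ) * y : ℝ) : WithTop ℝ) = T := hgk₀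
            calc e ((q * (X - C a)).coeff (n+1)) + ((((n+1 : ℕ) : ℝ) * y : ℝ) : WithTop ℝ)
                = (e (q.coeff n) + ((((n : ℕ) : ℝ) * y : ℝ) : WithTop ℝ)) + ((y:ℝ) : WithTop ℝ) := by
                  rw [hctop, hcast, ← add_assoc]
              _ = T + ((y:ℝ) : WithTop ℝ) := by rw [hgT]
              _ = T + m := by rw [hmeq]
          · have hgT : e (q.coeff k₀) + ((((k₀ : ℕ) : ℝ) * y : ℝ) : WithTop ℝ) = T := hgk₀
            have hgt : T < e (q.coeff (k₀+1)) + ((((k₀+1 : ℕ) : ℝ) * y : ℝ) : WithTop ℝ) :=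
              hmax (k₀+1) (by omega) (by omega)
            have hlt : e (q.coeff k₀) < e (q.coeff (k₀+1) * a) := by
              refine (WithTop.add_lt_add_iff_right
                (hcoetop (((k₀+1 : ℕ) : ℝ) * y))).1 ?_
              calc e (q.coeff k₀) + ((((k₀+1 : ℕ) : ℝ) * y : ℝ) : WithTop ℝ)
                  = (e (q.coeff k₀) + ((((k₀ : ℕ) : ℝ) * y : ℝ) : WithTop ℝ)) + ((y:ℝ) : WithTop ℝ) := by
                    rw [hcast, ← add_assoc]
                _ = ((y:ℝ) : WithTop ℝ) + T := by rw [hgT, add_comm]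
                _ < ((y:ℝ) : WithTop ℝ) + (e (q.coeff (k₀+1)) + ((((k₀+1 : ℕ) : ℝ) * y : ℝ) : WithTop ℝ)) :=
                    WithTop.add_lt_add_left hytop hgt
                _ ≤ e a + (e (q.coeff (k₀+1)) + ((((k₀+1 : ℕ) : ℝ) * y : ℝ) : WithTop ℝ)) :=
                    add_le_add_left hcase _
                _ = e (q.coeff (k₀+1) * a) + ((((k₀+1 : ℕ) : ℝ) * y : ℝ) : WithTop ℝ) := by
                    rw [h1, add_assoc]
            calc e ((q * (X - C a)).coeff (k₀+1)) + ((((k₀+1 : ℕ) : ℝ) * y : ℝ) : WithTop ℝ)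
                = e (q.coeff k₀) + ((((k₀+1 : ℕ) : ℝ) * y : ℝ) : WithTop ℝ) := by
                  rw [hck k₀, qv_sub_left e he_add he_mul he_neg hlt]
              _ = T + ((y:ℝ) : WithTop ℝ) := by rw [hcast, ← add_assoc, hgT]
              _ = T + m := by rw [hmeq]
        · -- m = e a
          have hmeq : m = e a := min_eq_right hcase.le
          by_cases hk₀0 : k₀ = 0
          · have hmem : 0 ∈ Finset.range (n + 1 + 1) := Finset.mem_range.2 (by omega)
            refine le_trans (Finset.inf_le hmem) (le_of_eq ?_)
            beta_reduce
            have hgT : e (q.coeff 0) + ((((0 : ℕ) : ℝ) * y : ℝ) : WithTop ℝ) = T := by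
              rw [hk₀0] at hgk₀; exact hgk₀
            calc e ((q * (X - C a)).coeff 0) + ((((0 : ℕ) : ℝ) * y : ℝ) : WithTop ℝ)
                = e a + (e (q.coeff 0) + ((((0 : ℕ) : ℝ) * y : ℝ) : WithTop ℝ)) := by
                  rw [ea0, add_assoc]
              _ = e a + T := by rw [hgT]
              _ = T + m := by rw [hmeq, add_comm]
          · obtain ⟨j, hj⟩ := Nat.exists_eq_succ_of_ne_zero hk₀0
            rw [hj] at hgk₀ hk₀n
            have hgT : e (q.coeff (j+1)) + ((((j+1 : ℕ) : ℝ) * y : ℝ) : WithTop ℝ) = T := hgk₀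
            have hmem : j + 1 ∈ Finset.range (n + 1 + 1) := Finset.mem_range.2 (by omega)
            refine le_trans (Finset.inf_le hmem) (le_of_eq ?_)
            beta_reduce
            have hlt : e (q.coeff (j+1) * a) < e (q.coeff j) := by
              refine (WithTop.add_lt_add_iff_right
                (hcoetop (((j+1 : ℕ) : ℝ) * y))).1 ?_
              calc e (q.coeff (j+1) * a) + ((((j+1 : ℕ) : ℝ) * y : ℝ) : WithTop ℝ)
                  = e a + (e (q.coeff (j+1)) + ((((j+1 : ℕ) : ℝ) * y : ℝ) : WithTop ℝ)) := by
                    rw [h1, add_assoc]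
                _ = e a + T := by rw [hgT]
                _ < ((y:ℝ) : WithTop ℝ) + T := WithTop.add_lt_add_right hTtop hcase
                _ = T + ((y:ℝ) : WithTop ℝ) := add_comm _ _
                _ ≤ (e (q.coeff j) + ((((j : ℕ) : ℝ) * y : ℝ) : WithTop ℝ)) + ((y:ℝ) : WithTop ℝ) :=
                    add_le_add_left (hTle j (by omega)) _
                _ = e (q.coeff j) + ((((j+1 : ℕ) : ℝ) * y : ℝ) : WithTop ℝ) := by
                    rw [add_assoc, ← hcast]
            calc e ((q * (X - C a)).coeff (j+1)) + ((((j+1 : ℕ) : ℝ) * y : ℝ) : WithTop ℝ)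
                = e (q.coeff (j+1) * a) + ((((j+1 : ℕ) : ℝ) * y : ℝ) : WithTop ℝ) := by
                  rw [hck j, qv_sub_right e he_add he_mul he_neg hlt]
              _ = e a + T := by rw [h1, add_assoc, hgT]
              _ = T + m := by rw [hmeq, add_comm]
      · -- T + m ≤ inf
        refine Finset.le_inf fun k hk => ?_
        rw [Finset.mem_range] at hk
        beta_reduce
        have h1 : ∀ k : ℕ, e (q.coeff k * a) = e a + e (q.coeff k) := by
          intro k; rw [mul_comm, hdagA]
        match k, hk with
        | 0, _ =>
            rw [ea0]
            calc T + m ≤ (e (q.coeff 0) + ((((0:ℕ):ℝ) * y : ℝ) : WithTop ℝ)) + e a :=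
                add_le_add (hTle 0 (by omega)) hma
              _ = e a + e (q.coeff 0) + ((((0:ℕ):ℝ) * y : ℝ) : WithTop ℝ) := by
                  rw [add_comm _ (e a), ← add_assoc]
        | (k+1), hk =>
            by_cases hkn : k = n
            · rw [hkn, hctop, hcast n]
              calc T + m ≤ (e (q.coeff n) + ((((n:ℕ):ℝ) * y : ℝ) : WithTop ℝ)) + ((y:ℝ) : WithTop ℝ) :=
                  add_le_add (hTle n le_rfl) hmy
                _ = e (q.coeff n) + (((((n:ℕ):ℝ) * y : ℝ) : WithTop ℝ) + ((y:ℝ) : WithTop ℝ)) :=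
                  add_assoc _ _ _
            · have hk' : k + 1 ≤ n := by omega
              rw [hck k]
              have hmin := qv_sub_ge e he_add he_mul he_neg (q.coeff k) (q.coeff (k+1) * a)
              rcases le_total (e (q.coeff k)) (e (q.coeff (k+1) * a)) with hle | hle
              · rw [min_eq_left hle] at hmin
                rw [hcast k]
                calc T + m ≤ (e (q.coeff k) + ((((k:ℕ):ℝ) * y : ℝ) : WithTop ℝ)) + ((y:ℝ) : WithTop ℝ) :=
                    add_le_add (hTle k (by omega)) hmy
                  _ = e (q.coeff k) + (((((k:ℕ):ℝ) * y : ℝ) : WithTop ℝ) + ((y:ℝ) : WithTop ℝ)) :=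
                    add_assoc _ _ _
                  _ ≤ e (q.coeff k - q.coeff (k+1) * a)
                      + (((((k:ℕ):ℝ) * y : ℝ) : WithTop ℝ) + ((y:ℝ) : WithTop ℝ)) :=
                    add_le_add_left hmin _
              · rw [min_eq_right hle] at hmin
                calc T + m ≤ (e (q.coeff (k+1)) + ((((k+1:ℕ):ℝ) * y : ℝ) : WithTop ℝ)) + e a :=
                    add_le_add (hTle (k+1) hk') hma
                  _ = e a + (e (q.coeff (k+1)) + ((((k+1:ℕ):ℝ) * y : ℝ) : WithTop ℝ)) := add_comm _ _
                  _ = (e a + e (q.coeff (k+1))) + ((((k+1:ℕ):ℝ) * y : ℝ) : WithTop ℝ) :=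
                    (add_assoc _ _ _).symm
                  _ = e (q.coeff (k+1) * a) + ((((k+1:ℕ):ℝ) * y : ℝ) : WithTop ℝ) := by rw [h1]
                  _ ≤ e (q.coeff k - q.coeff (k+1) * a) + ((((k+1:ℕ):ℝ) * y : ℝ) : WithTop ℝ) :=
                    add_le_add_left hmin _
end Key


/-- If a polynomial over a commutative ring with a quasi-valuation `e` has
leading coefficient `1` and splits with all roots in
`R† = {f : e(fg) = e(f) + e(g) for all g}`, then the multiset of images by `e`
of the roots equals the multiset of tropical roots of `⊕ₖ e(𝒫ₖ) Yᵏ`. -/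
theorem stmt_10 {R : Type*} [CommRing R] (e : R → WithTop ℝ)
    (he_add : ∀ f g, min (e f) (e g) ≤ e (f + g))
    (he_mul : ∀ f g, e f + e g ≤ e (f * g))
    (he_neg : e (-1) = 0)
    (n : ℕ) (p : Polynomial R) (hlead : p.coeff n = 1)
    (Y : Fin n → R)
    (hsplit : p = ∏ i : Fin n, (Polynomial.X - Polynomial.C (Y i)))
    (hdag : ∀ i, ∀ g : R, e (Y i * g) = e (Y i) + e g) :
    ∃ c : Fin n → WithTop ℝ, Monotone c ∧
      (∀ y : ℝ, tropEval (fun k => e (p.coeff k)) n y =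
        e (p.coeff n) + ∑ i : Fin n, min (y : WithTop ℝ) (c i)) ∧
      (↑((List.ofFn Y).map e) : Multiset (WithTop ℝ)) =
        (↑(List.ofFn c) : Multiset (WithTop ℝ)) := by
  have hcoeffn : e (p.coeff n) = 0 := by rw [hlead]; exact qv_one e he_mul he_neg
  set f : Fin n → WithTop ℝ := fun i => e (Y i) with hf
  refine ⟨f ∘ Tuple.sort f, Tuple.monotone_sort f, ?_, ?_⟩
  · intro y
    have hkey := qv_key e he_add he_mul he_neg n Y hdag y
    rw [← hsplit] at hkey
    rw [hkey, hcoeffn, zero_add]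
    exact (Equiv.sum_comp (Tuple.sort f) (fun i => min (y : WithTop ℝ) (f i))).symm
  · have hperm : List.Perm (List.ofFn (f ∘ Tuple.sort f)) (List.ofFn f) :=
      Equiv.Perm.ofFn_comp_perm (Tuple.sort f) f
    have h1 : (List.ofFn Y).map e = List.ofFn f := by
      rw [List.map_ofFn]; rfl
    rw [h1]
    exact (Multiset.coe_eq_coe.2 hperm).symm
end
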